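/- arXiv:2408.09334 — 9 statements merged into one kernel-verified Lean document; each statement's English description precedes it below -/
import Mathlib

section
/- Let q = p^m with p prime and let 0 ≤ s < m. Let C be an [n,k,d]_q linear code over F_q. Then there exists a linear code D ⊆ F_q^n such that C = Hull_s(C) ⊕ D (an internal direct sum of F_q-subspaces) and D is an s-Galois LCD code, i.e. D ∩ D^{⊥_s} = {0}. -/
open Finset Matrix

noncomputable section

/-- The Hamming weight of a vector: the number of nonzero coordinates. -/
def hwt {G : Type*} [Zero G] {κ : Type*} (x : κ → G) : ℕ := Set.ncard {i | x i ≠ 0}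

/-- The linear code `C` has minimum Hamming weight `d`. -/
def minHWt {F : Type*} [Field F] {κ : Type*} (C : Submodule F (κ → F)) (d : ℕ) : Prop :=
  (∃ c ∈ C, c ≠ 0 ∧ hwt c = d) ∧ ∀ c ∈ C, c ≠ 0 → d ≤ hwt c

/-- The minimum Hamming weight (minimum distance) of a linear code. -/
def minDist {F : Type*} [Field F] {κ : Type*} (C : Submodule F (κ → F)) : ℕ :=
  sInf (hwt '' {c | c ∈ C ∧ c ≠ 0})

/-- The Euclidean dual of a linear code. -/
def euclDual {F : Type*} [Field F] {ι : Type*} [Fintype ι] (C : Submodule F (ι → F)) :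
    Submodule F (ι → F) where
  carrier := {x | ∀ c ∈ C, ∑ i, c i * x i = 0}
  add_mem' := by
    intro a b ha hb c hc
    simp only [Set.mem_setOf_eq] at *
    simp [Pi.add_apply, mul_add, Finset.sum_add_distrib, ha c hc, hb c hc]
  zero_mem' := by intro c hc; simp
  smul_mem' := by
    intro r a ha c hc
    simp only [Set.mem_setOf_eq] at *
    simp [Pi.smul_apply, smul_eq_mul, mul_left_comm, ← Finset.mul_sum, ha c hc]

/-- The `s`-Galois dual of a linear code over a field of characteristic `p`:
`{x | ∀ c ∈ C, ∑ i, c i * (x i)^(p^s) = 0}`. -/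
def sGaloisDual {F : Type*} [Field F] {ι : Type*} [Fintype ι]
    (p s : ℕ) [Fact p.Prime] [CharP F p] (C : Submodule F (ι → F)) :
    Submodule F (ι → F) where
  carrier := {x | ∀ c ∈ C, ∑ i, c i * x i ^ p ^ s = 0}
  add_mem' := by
    intro a b ha hb c hc
    simp only [Set.mem_setOf_eq] at *
    have h : ∀ i, ((a + b) i) ^ p ^ s = a i ^ p ^ s + b i ^ p ^ s := fun i => by
      simpa using add_pow_char_pow (a i) (b i) p s
    calc ∑ i, c i * ((a + b) i) ^ p ^ s
        = ∑ i, (c i * a i ^ p ^ s + c i * b i ^ p ^ s) :=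
          Finset.sum_congr rfl fun i _ => by rw [h i, mul_add]
      _ = 0 := by rw [Finset.sum_add_distrib, ha c hc, hb c hc, add_zero]
  zero_mem' := by
    intro c hc
    have hps : p ^ s ≠ 0 := pow_ne_zero _ (Nat.Prime.ne_zero Fact.out)
    simp [zero_pow hps]
  smul_mem' := by
    intro r a ha c hc
    simp only [Set.mem_setOf_eq] at *
    have h : ∀ i, ((r • a) i) ^ p ^ s = r ^ p ^ s * a i ^ p ^ s := fun i => by
      simp [mul_pow]
    calc ∑ i, c i * ((r • a) i) ^ p ^ s
        = ∑ i, r ^ p ^ s * (c i * a i ^ p ^ s) :=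
          Finset.sum_congr rfl fun i _ => by rw [h i]; ring
      _ = 0 := by rw [← Finset.mul_sum, ha c hc, mul_zero]

/-- The `s`-Galois hull of a linear code: `Hull_s(C) = C ∩ C^{⊥_s}`. -/
def sGaloisHull {F : Type*} [Field F] {ι : Type*} [Fintype ι]
    (p s : ℕ) [Fact p.Prime] [CharP F p] (C : Submodule F (ι → F)) :
    Submodule F (ι → F) :=
  C ⊓ sGaloisDual p s C

/-- The matrix-product code `[C_1, …, C_l] A ⊆ F^{t·n}`: codewords are indexed by
`Fin t × Fin n`, with block `j` equal to `∑ u, A u j • c u` for codewords `c u ∈ C u`. -/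
def matrixProductCode {F : Type*} [Field F] {n l t : ℕ}
    (C : Fin l → Submodule F (Fin n → F)) (A : Matrix (Fin l) (Fin t) F) :
    Submodule F (Fin t × Fin n → F) where
  carrier := {x | ∃ c : Fin l → Fin n → F, (∀ u, c u ∈ C u) ∧
      ∀ j i, x (j, i) = ∑ u, A u j * c u i}
  add_mem' := by
    rintro x y ⟨c, hc, hx⟩ ⟨c', hc', hy⟩
    exact ⟨c + c', fun u => (C u).add_mem (hc u) (hc' u), fun j i => by
      simp [hx j i, hy j i, mul_add, Finset.sum_add_distrib]⟩
  zero_mem' := ⟨0, fun u => (C u).zero_mem, fun j i => by simp⟩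
  smul_mem' := by
    rintro r x ⟨c, hc, hx⟩
    refine ⟨r • c, fun u => (C u).smul_mem r (hc u), fun j i => ?_⟩
    simp only [Pi.smul_apply, smul_eq_mul, hx j i, Finset.mul_sum]
    exact Finset.sum_congr rfl fun u _ => by ring

/-- `UA A i` : the code in `F^t` spanned by the first `i` rows of the matrix `A`. -/
def UA {F : Type*} [Field F] {l t : ℕ} (A : Matrix (Fin l) (Fin t) F) (i : ℕ) :
    Submodule F (Fin t → F) :=
  Submodule.span F ((fun u : Fin l => A u) '' {u | (u : ℕ) < i})

/-- The Gabidulin code of dimension `k` associated to `g : Fin m → K`, over a field `K`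
containing a subfield with `q` elements: the row span of the matrix `(g j ^ q ^ i)`. -/
def gabidulin {K : Type*} [Field K] (q : ℕ) {m : ℕ} (k : ℕ) (g : Fin m → K) :
    Submodule K (Fin m → K) :=
  Submodule.span K (Set.range fun i : Fin k => fun j => g j ^ q ^ (i : ℕ))



namespace GHD

open Module


variable {F : Type*} [Field F] {ι : Type*} [Fintype ι]

lemma mem_euclDual {W : Submodule F (ι → F)} {x : ι → F} :
    x ∈ euclDual W ↔ ∀ c ∈ W, ∑ i, c i * x i = 0 := Iff.rfl

/-- The dot-product map into the dual space. -/
def dotMap : (ι → F) →ₗ[F] Module.Dual F (ι → F) where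
  toFun y :=
    { toFun := fun c => ∑ i, c i * y i
      map_add' := fun a b => by simp [add_mul, Finset.sum_add_distrib]
      map_smul' := fun r a => by simp [Finset.mul_sum, mul_assoc] }
  map_add' a b := by ext c; simp [mul_add, Finset.sum_add_distrib]
  map_smul' r a := by ext c; simp [Finset.mul_sum, mul_left_comm]

lemma dotMap_injective : Function.Injective (dotMap (F := F) (ι := ι)) := by
  classical
  intro a b hab
  funext i
  have := LinearMap.congr_fun hab (Pi.single i 1)
  simpa [dotMap, Pi.single_apply] using this

lemma dotMap_bijective : Function.Bijective (dotMap (F := F) (ι := ι)) :=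
  ⟨dotMap_injective, by
    rw [← LinearMap.injective_iff_surjective_of_finrank_eq_finrank
      (Subspace.dual_finrank_eq (K := F) (V := ι → F)).symm]
    exact dotMap_injective⟩

lemma euclDual_eq_comap (W : Submodule F (ι → F)) :
    euclDual W = Submodule.comap dotMap W.dualAnnihilator := by
  ext x
  simp [mem_euclDual, Submodule.mem_comap, Submodule.mem_dualAnnihilator, dotMap]

lemma finrank_euclDual_add (W : Submodule F (ι → F)) :
    finrank F (euclDual W) + finrank F W = Fintype.card ι := by
  classical
  let e := LinearEquiv.ofBijective dotMap (dotMap_bijective (F := F) (ι := ι))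
  have h1 : euclDual W = Submodule.comap (e : (ι → F) →ₗ[F] Module.Dual F (ι → F))
      W.dualAnnihilator := euclDual_eq_comap W
  have h2 : finrank F (euclDual W) = finrank F W.dualAnnihilator := by
    rw [h1]
    exact LinearEquiv.finrank_eq (e.ofSubmodule' W.dualAnnihilator)
  have h3 : finrank F W.dualAnnihilator = finrank F ((ι → F) ⧸ W) :=
    (LinearEquiv.finrank_eq (Subspace.quotEquivAnnihilator W)).symm
  have h4 := Submodule.finrank_quotient_add_finrank W
  rw [h2, h3, h4, Module.finrank_pi]

lemma le_euclDual_euclDual (W : Submodule F (ι → F)) : W ≤ euclDual (euclDual W) := by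
  intro x hx c hc
  have := hc x hx
  rw [← this]
  exact Finset.sum_congr rfl fun i _ => mul_comm _ _

lemma euclDual_euclDual (W : Submodule F (ι → F)) : euclDual (euclDual W) = W := by
  have h1 := finrank_euclDual_add (euclDual W)
  have h2 := finrank_euclDual_add W
  exact (Submodule.eq_of_le_of_finrank_le (le_euclDual_euclDual W) (by omega)).symm

lemma euclDual_sup (A B : Submodule F (ι → F)) :
    euclDual (A ⊔ B) = euclDual A ⊓ euclDual B := by
  ext x
  constructor
  · intro h
    exact ⟨fun c hc => h c (Submodule.mem_sup_left hc),
      fun c hc => h c (Submodule.mem_sup_right hc)⟩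
  · rintro ⟨h1, h2⟩ c hc
    obtain ⟨a, ha, b, hb, rfl⟩ := Submodule.mem_sup.mp hc
    simp [Pi.add_apply, add_mul, Finset.sum_add_distrib, h1 a ha, h2 b hb]

lemma finrank_inf_euclDual_comm (A B : Submodule F (ι → F))
    (h : finrank F A = finrank F B) :
    finrank F (A ⊓ euclDual B : Submodule F (ι → F)) =
      finrank F (B ⊓ euclDual A : Submodule F (ι → F)) := by
  have e1 := Submodule.finrank_sup_add_finrank_inf_eq A (euclDual B)
  have e2 : euclDual (A ⊔ euclDual B) = euclDual A ⊓ B := by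
    rw [euclDual_sup, euclDual_euclDual]
  have e3 := finrank_euclDual_add (A ⊔ euclDual B)
  rw [e2] at e3
  have e4 := finrank_euclDual_add B
  have e5 : (euclDual A ⊓ B : Submodule F (ι → F)) = B ⊓ euclDual A := inf_comm _ _
  rw [e5] at e3
  omega



variable {K : Type*} [Field K] {V : Type*} [AddCommGroup V] [Module K V]

lemma exists_notMem {U : Submodule K V} (hU : U ≠ ⊤) : ∃ v, v ∉ U := by
  by_contra h
  push_neg at h
  exact hU (Submodule.eq_top_iff'.mpr h)

lemma exists_notMem_notMem {U W : Submodule K V}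
    (hU : U ≠ ⊤) (hW : W ≠ ⊤) : ∃ v, v ∉ U ∧ v ∉ W := by
  by_cases hUW : U ≤ W
  · obtain ⟨v, hv⟩ := exists_notMem hW
    exact ⟨v, fun h => hv (hUW h), hv⟩
  by_cases hWU : W ≤ U
  · obtain ⟨v, hv⟩ := exists_notMem hU
    exact ⟨v, hv, fun h => hv (hWU h)⟩
  obtain ⟨u, hu, huW⟩ := SetLike.not_le_iff_exists.mp hUW
  obtain ⟨w, hw, hwU⟩ := SetLike.not_le_iff_exists.mp hWU
  refine ⟨u + w, fun h => hwU ?_, fun h => huW ?_⟩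
  · simpa using U.sub_mem h hu
  · simpa using W.sub_mem h hw

lemma inf_span_singleton_eq_bot {U : Submodule K V} {v : V} (hv : v ∉ U) :
    U ⊓ (K ∙ v) = ⊥ := by
  rw [eq_bot_iff]
  rintro x ⟨hxU, hxS⟩
  obtain ⟨a, rfl⟩ := Submodule.mem_span_singleton.mp hxS
  rcases eq_or_ne a 0 with rfl | ha
  · simp
  · exact absurd (by simpa [smul_smul, inv_mul_cancel₀ ha] using U.smul_mem a⁻¹ hxU) hv

lemma isCompl_step {U X : Submodule K V} {v : V} (hvU : v ∉ U)
    (h : IsCompl (U ⊔ (K ∙ v)) X) : IsCompl U (X ⊔ (K ∙ v)) := by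
  constructor
  · rw [disjoint_iff, eq_bot_iff]
    rintro x ⟨hxU, hxX⟩
    obtain ⟨y, hy, z, hz, rfl⟩ := Submodule.mem_sup.mp hxX
    have hyU : y ∈ (U ⊔ (K ∙ v) : Submodule K V) := by
      have h1 : (y + z) - z = y := by abel
      rw [← h1]
      exact Submodule.sub_mem _ (Submodule.mem_sup_left hxU)
        (Submodule.mem_sup_right hz)
    have hy0 : y = 0 := (Submodule.disjoint_def.mp h.disjoint) y hyU hy
    subst hy0
    have hmem : (0 : V) + z ∈ U ⊓ (K ∙ v) := ⟨hxU, by simpa using hz⟩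
    rw [inf_span_singleton_eq_bot hvU] at hmem
    simpa using hmem
  · rw [codisjoint_iff]
    rw [sup_comm X (K ∙ v), ← sup_assoc]
    exact h.codisjoint.eq_top

lemma exists_common_compl_aux [FiniteDimensional K V] (c : ℕ) :
    ∀ U W : Submodule K V, finrank K U = finrank K W →
      finrank K V - finrank K U = c → ∃ X, IsCompl U X ∧ IsCompl W X := by
  induction c with
  | zero =>
    intro U W h hc
    have hU : U = ⊤ := by
      apply Submodule.eq_top_of_finrank_eq
      have := U.finrank_le
      omega
    have hW : W = ⊤ := by
      apply Submodule.eq_top_of_finrank_eq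
      have := W.finrank_le
      omega
    rw [hU, hW]
    exact ⟨⊥, isCompl_top_bot, isCompl_top_bot⟩
  | succ c ih =>
    intro U W h hc
    have hUle := U.finrank_le
    have hWle := W.finrank_le
    have hU : U ≠ ⊤ := by
      intro hU
      rw [hU, finrank_top] at hc
      omega
    have hW : W ≠ ⊤ := by
      intro hW
      rw [hW, finrank_top] at h
      omega
    obtain ⟨v, hvU, hvW⟩ := exists_notMem_notMem hU hW
    have hv0 : v ≠ 0 := fun h0 => hvU (h0 ▸ U.zero_mem)
    have hspan : finrank K (K ∙ v) = 1 := finrank_span_singleton hv0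
    have hUv : finrank K (U ⊔ (K ∙ v) : Submodule K V) = finrank K U + 1 := by
      have := Submodule.finrank_sup_add_finrank_inf_eq U (K ∙ v)
      rw [inf_span_singleton_eq_bot hvU, hspan] at this
      simpa using this
    have hWv : finrank K (W ⊔ (K ∙ v) : Submodule K V) = finrank K W + 1 := by
      have := Submodule.finrank_sup_add_finrank_inf_eq W (K ∙ v)
      rw [inf_span_singleton_eq_bot hvW, hspan] at this
      simpa using this
    have hle' := (U ⊔ (K ∙ v)).finrank_le
    obtain ⟨X, hUX, hWX⟩ := ih (U ⊔ (K ∙ v)) (W ⊔ (K ∙ v)) (by omega) (by omega)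
    exact ⟨X ⊔ (K ∙ v), isCompl_step hvU hUX, isCompl_step hvW hWX⟩

lemma exists_common_compl [FiniteDimensional K V] (U W : Submodule K V)
    (h : finrank K U = finrank K W) : ∃ X, IsCompl U X ∧ IsCompl W X :=
  exists_common_compl_aux (finrank K V - finrank K U) U W h rfl


end GHD

namespace GHD

open Module

section tau

variable {F : Type*} [Field F] [Fintype F] {ι : Type*} [Fintype ι]
variable (p t : ℕ) [Fact p.Prime] [CharP F p]

lemma powSurj : Function.Surjective (fun x : F => x ^ p ^ t) := by
  have h : Function.Injective (iterateFrobenius F p t) := (iterateFrobenius F p t).injective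
  have := Finite.injective_iff_surjective.mp h
  exact fun y => by
    obtain ⟨x, hx⟩ := this y
    exact ⟨x, by simpa [iterateFrobenius_def] using hx⟩

/-- The image of a linear code under the coordinatewise `p^t`-power map. -/
def tauSub (W : Submodule F (ι → F)) : Submodule F (ι → F) where
  carrier := (fun (x : ι → F) (i : ι) => x i ^ p ^ t) '' W
  add_mem' := by
    rintro _ _ ⟨a, ha, rfl⟩ ⟨b, hb, rfl⟩
    exact ⟨a + b, W.add_mem ha hb, funext fun i => by
      simpa using (add_pow_char_pow (a i) (b i) p t)⟩
  zero_mem' := ⟨0, W.zero_mem, funext fun i => by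
    simp [zero_pow (pow_ne_zero t (Nat.Prime.ne_zero Fact.out))]⟩
  smul_mem' := by
    rintro r _ ⟨a, ha, rfl⟩
    obtain ⟨r', rfl⟩ := powSurj p t r
    exact ⟨r' • a, W.smul_mem r' ha, funext fun i => by simp [mul_pow]⟩

lemma mem_tauSub {W : Submodule F (ι → F)} {x : ι → F} :
    x ∈ tauSub p t W ↔ ∃ c ∈ W, (fun i => c i ^ p ^ t) = x := Iff.rfl

lemma tau_injective : Function.Injective (fun (x : ι → F) (i : ι) => x i ^ p ^ t) := by
  intro a b hab
  funext i
  have h := congrFun hab i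
  exact (iterateFrobenius F p t).injective (by simpa [iterateFrobenius_def] using h)

lemma finrank_tauSub (W : Submodule F (ι → F)) :
    Module.finrank F (tauSub p t W) = Module.finrank F W := by
  classical
  haveI : Fintype W := Fintype.ofFinite _
  haveI : Fintype (tauSub p t W) := Fintype.ofFinite _
  have hcard : Fintype.card W = Fintype.card (tauSub p t W) := by
    apply Fintype.card_congr
    refine Equiv.ofBijective (fun x => ⟨fun i => (x : ι → F) i ^ p ^ t, ⟨x, x.2, rfl⟩⟩) ?_
    constructor
    · intro a b hab
      exact Subtype.ext (tau_injective p t (by simpa using congrArg Subtype.val hab))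
    · rintro ⟨_, c, hc, rfl⟩
      exact ⟨⟨c, hc⟩, rfl⟩
  have h1 : Fintype.card W = Fintype.card F ^ Module.finrank F W := card_eq_pow_finrank
  have h2 : Fintype.card (tauSub p t W) =
      Fintype.card F ^ Module.finrank F (tauSub p t W) := card_eq_pow_finrank
  rw [h1, h2] at hcard
  exact (Nat.pow_right_injective Fintype.one_lt_card hcard).symm

end tau

end GHD


namespace GHD

section main

open Module

variable {p m s : ℕ} [Fact p.Prime] {F : Type*} [Field F] [Fintype F] [CharP F p]
variable {ι : Type*} [Fintype ι]

lemma pow_cancel1 (hsm : s ≤ m) (hcard : Fintype.card F = p ^ m) (x : F) :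
    (x ^ p ^ s) ^ p ^ (m - s) = x := by
  have h : s + (m - s) = m := by omega
  rw [← pow_mul, ← pow_add, h, ← hcard, FiniteField.pow_card]

lemma pow_cancel2 (hsm : s ≤ m) (hcard : Fintype.card F = p ^ m) (x : F) :
    (x ^ p ^ (m - s)) ^ p ^ s = x := by
  have h : m - s + s = m := by omega
  rw [← pow_mul, ← pow_add, h, ← hcard, FiniteField.pow_card]

lemma mem_sGaloisDual {W : Submodule F (ι → F)} {x : ι → F} :
    x ∈ sGaloisDual p s W ↔ ∀ c ∈ W, ∑ i, c i * x i ^ p ^ s = 0 := Iff.rfl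

lemma sGaloisDual_eq (hsm : s ≤ m) (hcard : Fintype.card F = p ^ m)
    (C : Submodule F (ι → F)) :
    sGaloisDual p s C = euclDual (tauSub p (m - s) C) := by
  ext x
  rw [mem_sGaloisDual, mem_euclDual]
  constructor
  · intro h y hy
    obtain ⟨c, hc, rfl⟩ := hy
    have h1 := congrArg (iterateFrobenius F p (m - s)) (h c hc)
    rw [map_sum, map_zero] at h1
    simpa [iterateFrobenius_def, mul_pow, pow_cancel1 hsm hcard] using h1
  · intro h c hc
    have h0 := h (fun i => c i ^ p ^ (m - s)) ⟨c, hc, rfl⟩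
    have h1 := congrArg (iterateFrobenius F p s) h0
    rw [map_sum, map_zero] at h1
    simpa [iterateFrobenius_def, mul_pow, pow_cancel2 hsm hcard] using h1

/-- The "left kernel" code: elements of `C` whose `p^t`-power twist is Euclidean-orthogonal
to all of `C`. -/
def Lsub (p t : ℕ) [Fact p.Prime] [CharP F p] (C : Submodule F (ι → F)) :
    Submodule F (ι → F) where
  carrier := {x | x ∈ C ∧ (fun i => x i ^ p ^ t) ∈ euclDual C}
  add_mem' := by
    rintro a b ⟨haC, haD⟩ ⟨hbC, hbD⟩
    refine ⟨C.add_mem haC hbC, ?_⟩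
    have h : (fun i => (a + b) i ^ p ^ t) =
        (fun i => a i ^ p ^ t) + (fun i => b i ^ p ^ t) :=
      funext fun i => by simpa using add_pow_char_pow (a i) (b i) p t
    rw [h]
    exact (euclDual C).add_mem haD hbD
  zero_mem' := by
    refine ⟨C.zero_mem, ?_⟩
    have h : (fun i => (0 : ι → F) i ^ p ^ t) = (0 : ι → F) :=
      funext fun i => by simp [zero_pow (pow_ne_zero t (Nat.Prime.ne_zero Fact.out))]
    rw [h]
    exact (euclDual C).zero_mem
  smul_mem' := by
    rintro r a ⟨haC, haD⟩
    refine ⟨C.smul_mem r haC, ?_⟩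
    have h : (fun i => (r • a) i ^ p ^ t) = (r ^ p ^ t) • fun i => a i ^ p ^ t :=
      funext fun i => by simp [mul_pow]
    rw [h]
    exact (euclDual C).smul_mem _ haD

lemma mem_Lsub {t : ℕ} {C : Submodule F (ι → F)} {x : ι → F} :
    x ∈ Lsub p t C ↔ x ∈ C ∧ (fun i => x i ^ p ^ t) ∈ euclDual C := Iff.rfl

lemma tauSub_Lsub (t : ℕ) (C : Submodule F (ι → F)) :
    tauSub p t (Lsub p t C) = tauSub p t C ⊓ euclDual C := by
  ext x
  constructor
  · rintro ⟨c, ⟨hcC, hcD⟩, rfl⟩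
    exact ⟨⟨c, hcC, rfl⟩, hcD⟩
  · rintro ⟨⟨c, hcC, rfl⟩, hD⟩
    exact ⟨c, ⟨hcC, hD⟩, rfl⟩

end main

end GHD


/-- Every linear code `C` over `F_q` (`q = p^m`, `0 ≤ s < m`) decomposes as
`C = Hull_s(C) ⊕ D` with `D` an `s`-Galois LCD code. -/
theorem galois_hull_decomposition
    {p m s : ℕ} [Fact p.Prime] (hs : s < m)
    {F : Type*} [Field F] [Fintype F] [CharP F p] (hcard : Fintype.card F = p ^ m)
    {n k d : ℕ} (C : Submodule F (Fin n → F))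
    (hk : Module.finrank F C = k) (hd : minHWt C d) :
    ∃ D : Submodule F (Fin n → F),
      sGaloisHull p s C ⊔ D = C ∧
      sGaloisHull p s C ⊓ D = ⊥ ∧
      D ⊓ sGaloisDual p s D = ⊥ := by
  classical
  have hsm : s ≤ m := hs.le
  set t := m - s with ht
  have hdualC : sGaloisDual p s C = euclDual (GHD.tauSub p t C) :=
    GHD.sGaloisDual_eq hsm hcard C
  set R := sGaloisHull p s C with hR
  set L := GHD.Lsub p t C with hL
  have hRC : R ≤ C := inf_le_left
  have hLC : L ≤ C := fun x hx => hx.1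
  have hrank : Module.finrank F R = Module.finrank F L := by
    have h1 : Module.finrank F C = Module.finrank F (GHD.tauSub p t C) :=
      (GHD.finrank_tauSub p t C).symm
    have h2 : R = C ⊓ euclDual (GHD.tauSub p t C) := by
      rw [hR]
      unfold sGaloisHull
      rw [hdualC]
    calc Module.finrank F R
        = Module.finrank F (C ⊓ euclDual (GHD.tauSub p t C) : Submodule F (Fin n → F)) := by
          rw [h2]
      _ = Module.finrank F (GHD.tauSub p t C ⊓ euclDual C : Submodule F (Fin n → F)) :=
          GHD.finrank_inf_euclDual_comm _ _ h1
      _ = Module.finrank F (GHD.tauSub p t L) := by rw [GHD.tauSub_Lsub]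
      _ = Module.finrank F L := GHD.finrank_tauSub p t L
  have hfr : Module.finrank F (R.comap C.subtype) = Module.finrank F (L.comap C.subtype) := by
    have e1 : Module.finrank F (R.comap C.subtype) = Module.finrank F R :=
      LinearEquiv.finrank_eq (Submodule.comapSubtypeEquivOfLe hRC)
    have e2 : Module.finrank F (L.comap C.subtype) = Module.finrank F L :=
      LinearEquiv.finrank_eq (Submodule.comapSubtypeEquivOfLe hLC)
    rw [e1, e2, hrank]
  obtain ⟨X, hX1, hX2⟩ := GHD.exists_common_compl (R.comap C.subtype) (L.comap C.subtype) hfr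
  set D := Submodule.map C.subtype X with hD
  have hDle : D ≤ C := Submodule.map_subtype_le C X
  have hsupR : R ⊔ D = C := by
    have h := congrArg (Submodule.map C.subtype) hX1.codisjoint.eq_top
    rwa [Submodule.map_sup, Submodule.map_comap_subtype, Submodule.map_subtype_top,
      inf_eq_right.mpr hRC] at h
  have hsupL : L ⊔ D = C := by
    have h := congrArg (Submodule.map C.subtype) hX2.codisjoint.eq_top
    rwa [Submodule.map_sup, Submodule.map_comap_subtype, Submodule.map_subtype_top,
      inf_eq_right.mpr hLC] at h
  have hinfR : R ⊓ D = ⊥ := by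
    rw [eq_bot_iff]
    rintro x ⟨hxR, hxD⟩
    obtain ⟨y, hyX, rfl⟩ := hxD
    have hyR : y ∈ R.comap C.subtype := hxR
    have hy0 : y = 0 := by
      simpa using hX1.disjoint.le_bot (Submodule.mem_inf.mpr ⟨hyR, hyX⟩)
    simp [hy0]
  refine ⟨D, hsupR, hinfR, ?_⟩
  rw [eq_bot_iff]
  rintro x ⟨hxD, hxdual⟩
  have hxC : x ∈ C := hDle hxD
  have hxgal : x ∈ sGaloisDual p s C := by
    rw [GHD.mem_sGaloisDual]
    intro c hc
    rw [← hsupL] at hc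
    obtain ⟨l, hl, e, he, rfl⟩ := Submodule.mem_sup.mp hc
    have hd0 : ∑ i, e i * x i ^ p ^ s = 0 := (GHD.mem_sGaloisDual.mp hxdual) e he
    have hl0 : ∑ i, l i * x i ^ p ^ s = 0 := by
      have h1 : ∑ i, x i * l i ^ p ^ t = 0 := (GHD.mem_Lsub.mp hl).2 x hxC
      have h2 := congrArg (iterateFrobenius F p s) h1
      rw [map_sum, map_zero] at h2
      have h3 : ∀ i, (x i * l i ^ p ^ t) ^ p ^ s = l i * x i ^ p ^ s := fun i => by
        rw [mul_pow, GHD.pow_cancel2 hsm hcard, mul_comm]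
      simpa [iterateFrobenius_def, h3] using h2
    simp [Pi.add_apply, add_mul, Finset.sum_add_distrib, hl0, hd0]
  have hxR : x ∈ R := ⟨hxC, hxgal⟩
  have hmem : x ∈ R ⊓ D := ⟨hxR, hxD⟩
  rw [hinfR] at hmem
  exact hmem

end
end

section
/- Let q = p^m with p prime and let 0 ≤ s < m. Let C be an [n,k,d]_q linear code over F_q with dim_{F_q} Hull_s(C) = h. Then there exists an s-Galois LCD linear code D ⊆ F_q^n of dimension k − h whose minimum Hamming weight is at least d; moreover D can be taken to be a subcode of C with C = Hull_s(C) ⊕ D. -/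
open Finset Matrix

set_option maxHeartbeats 1000000
set_option synthInstance.maxHeartbeats 400000
set_option maxRecDepth 8000

noncomputable section

section AuxGalois

variable {F : Type*} [Field F] {n p s : ℕ}

/-- The image of a submodule under the coordinatewise power map `y ↦ (y i ^ p ^ s)`. -/
def phiSub (hadd : ∀ x y : F, (x + y) ^ p ^ s = x ^ p ^ s + y ^ p ^ s)
    (hzero : (0 : F) ^ p ^ s = 0)
    (hsurj : ∀ r : F, ∃ b : F, b ^ p ^ s = r)
    (D₀ : Submodule F (Fin n → F)) : Submodule F (Fin n → F) where
  carrier := (fun y : Fin n → F => fun i => y i ^ p ^ s) '' (D₀ : Set (Fin n → F))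
  add_mem' := by
    rintro a b ⟨x, hx, rfl⟩ ⟨y, hy, rfl⟩
    exact ⟨x + y, D₀.add_mem hx hy, funext fun i => hadd (x i) (y i)⟩
  zero_mem' := ⟨0, D₀.zero_mem, funext fun i => hzero⟩
  smul_mem' := by
    rintro r a ⟨x, hx, rfl⟩
    obtain ⟨b, hb⟩ := hsurj r
    refine ⟨b • x, D₀.smul_mem _ hx, funext fun i => ?_⟩
    simp [mul_pow, hb]

lemma mem_phiSub {hadd : ∀ x y : F, (x + y) ^ p ^ s = x ^ p ^ s + y ^ p ^ s}
    {hzero : (0 : F) ^ p ^ s = 0} {hsurj : ∀ r : F, ∃ b : F, b ^ p ^ s = r}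
    {D₀ : Submodule F (Fin n → F)} {x : Fin n → F} :
    x ∈ phiSub hadd hzero hsurj D₀ ↔
      ∃ y ∈ D₀, (fun i => y i ^ p ^ s) = x := Iff.rfl

/-- The pairing `u ↦ (x ↦ ∑ i, x i * u i)` between two submodules of `Fin n → F`. -/
def pairDual (P Q : Submodule F (Fin n → F)) : ↥Q →ₗ[F] Module.Dual F ↥P where
  toFun u :=
    { toFun := fun x => ∑ i, (x : Fin n → F) i * (u : Fin n → F) i
      map_add' := by
        intro x y
        simp [add_mul, Finset.sum_add_distrib]
      map_smul' := by
        intro c x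
        simp [Finset.mul_sum, mul_assoc] }
  map_add' := by
    intro u v
    apply LinearMap.ext
    intro x
    simp [mul_add, Finset.sum_add_distrib]
  map_smul' := by
    intro c u
    apply LinearMap.ext
    intro x
    simp [Finset.mul_sum, mul_left_comm]

@[simp] lemma pairDual_apply (P Q : Submodule F (Fin n → F)) (u : ↥Q) (x : ↥P) :
    pairDual P Q u x = ∑ i, (x : Fin n → F) i * (u : Fin n → F) i := rfl

/-- Key linear-algebra lemma: if two linear maps into dual spaces have trivial joint kernel
and the dimensions match, then there is a correcting map `w` making the combination
injective. -/
lemma exists_w {F : Type*} [Field F] {V W X : Type*}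
    [AddCommGroup V] [Module F V] [AddCommGroup W] [Module F W]
    [AddCommGroup X] [Module F X]
    [FiniteDimensional F V] [FiniteDimensional F W] [FiniteDimensional F X]
    (f0 : V →ₗ[F] Module.Dual F W) (g0 : V →ₗ[F] Module.Dual F X)
    (hker : ∀ u, f0 u = 0 → g0 u = 0 → u = 0)
    (hdim : Module.finrank F V = Module.finrank F W) :
    ∃ w : W →ₗ[F] X, ∀ u : V, (∀ y : W, f0 u y + g0 u (w y) = 0) → u = 0 := by
  classical
  obtain ⟨K', hK'⟩ : ∃ K' : Submodule F V, K' = LinearMap.ker f0 := ⟨_, rfl⟩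
  obtain ⟨g1, hg1⟩ : ∃ g1 : ↥K' →ₗ[F] Module.Dual F X, g1 = g0.comp K'.subtype := ⟨_, rfl⟩
  have hg1inj : Function.Injective g1 := by
    rw [← LinearMap.ker_eq_bot, eq_bot_iff]
    rintro ⟨xv, hxv⟩ hx0
    have hg0x : g0 xv = 0 := by
      have hx0' : g1 ⟨xv, hxv⟩ = 0 := hx0
      rw [hg1] at hx0'
      exact hx0'
    have hfx : f0 xv = 0 := by
      have hxv2 := hxv
      rw [hK'] at hxv2
      exact hxv2
    have h0 : xv = 0 := hker _ hfx hg0x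
    rw [Submodule.mem_bot]
    exact Subtype.ext h0
  obtain ⟨G, hG⟩ : ∃ G : Submodule F (Module.Dual F X), G = LinearMap.range g1 := ⟨_, rfl⟩
  have hGK : Module.finrank F ↥G = Module.finrank F ↥K' := by
    rw [hG]
    exact LinearMap.finrank_range_of_inj hg1inj
  obtain ⟨Co, hCo⟩ := Submodule.exists_isCompl (LinearMap.range f0)
  obtain ⟨Gc, hGc⟩ := Submodule.exists_isCompl G
  have hfrCo : Module.finrank F ↥Co = Module.finrank F ↥G := by
    have h1 := Submodule.finrank_sup_add_finrank_inf_eq (LinearMap.range f0) Co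
    rw [hCo.sup_eq_top, hCo.inf_eq_bot, finrank_bot, finrank_top,
      Subspace.dual_finrank_eq] at h1
    have h2 := LinearMap.finrank_range_add_finrank_ker f0
    rw [hdim, ← hK'] at h2
    omega
  haveI : Module.Free F ↥G := Module.Free.of_divisionRing F ↥G
  haveI : Module.Free F ↥Co := Module.Free.of_divisionRing F ↥Co
  set e : ↥G ≃ₗ[F] ↥Co := LinearEquiv.ofFinrankEq ↥G ↥Co hfrCo.symm with hedef
  set π : Module.Dual F X →ₗ[F] ↥G := Submodule.linearProjOfIsCompl G Gc hGc with hπdef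
  set z : Module.Dual F X →ₗ[F] Module.Dual F W :=
    Co.subtype.comp (e.toLinearMap.comp π) with hzdef
  set w : W →ₗ[F] X :=
    ((Module.evalEquiv F X).symm.toLinearMap.comp
      (z.dualMap.comp (Module.evalEquiv F W).toLinearMap)) with hwdef
  have hwspec : ∀ (φ : Module.Dual F X) (y : W), φ (w y) = z φ y := by
    intro φ y
    simp [hwdef]
  refine ⟨w, fun u hu => ?_⟩
  have hu' : f0 u + z (g0 u) = 0 := by
    apply LinearMap.ext
    intro y
    have h1 := hu y
    simp only [LinearMap.add_apply, LinearMap.zero_apply]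
    rw [← hwspec (g0 u) y]
    exact h1
  have hmem1 : f0 u ∈ LinearMap.range f0 := LinearMap.mem_range_self _ u
  have hmem2 : z (g0 u) ∈ Co := (e (π (g0 u))).2
  have hf0u : f0 u = 0 := by
    have h1 : f0 u ∈ LinearMap.range f0 ⊓ Co := by
      refine ⟨hmem1, ?_⟩
      have hneg : f0 u = -(z (g0 u)) := by
        rw [eq_neg_iff_add_eq_zero]; exact hu'
      rw [hneg]; exact Co.neg_mem hmem2
    rw [hCo.inf_eq_bot] at h1
    simpa using h1
  have hzg : z (g0 u) = 0 := by
    rw [hf0u, zero_add] at hu'; exact hu'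
  have huK : u ∈ K' := by rw [hK']; exact hf0u
  have hg0G : g0 u ∈ G := by
    rw [hG]
    exact ⟨⟨u, huK⟩, by rw [hg1]; rfl⟩
  have hπg : π (g0 u) = ⟨g0 u, hg0G⟩ :=
    Submodule.linearProjOfIsCompl_apply_left hGc ⟨g0 u, hg0G⟩
  have hzg' : (↑(e ⟨g0 u, hg0G⟩) : Module.Dual F W) = 0 := by
    rw [← hπg]; exact hzg
  have he0 : (⟨g0 u, hg0G⟩ : ↥G) = 0 := by
    apply e.injective
    apply Subtype.ext
    simpa using hzg'
  have hg0u : g0 u = 0 := by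
    simpa [Subtype.ext_iff] using he0
  exact hker u hf0u hg0u

end AuxGalois

/-- If `dim Hull_s(C) = h` then there is an `s`-Galois LCD subcode `D ≤ C`
of dimension `k - h`, minimum weight at least `d`, with `C = Hull_s(C) ⊕ D`. -/
theorem exists_galois_lcd_subcode
    {p m s : ℕ} [Fact p.Prime] (hs : s < m)
    {F : Type*} [Field F] [Fintype F] [CharP F p] (hcard : Fintype.card F = p ^ m)
    {n k d h : ℕ} (C : Submodule F (Fin n → F))
    (hk : Module.finrank F C = k) (hd : minHWt C d)
    (hh : Module.finrank F (sGaloisHull p s C) = h) :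
    ∃ D : Submodule F (Fin n → F),
      D ≤ C ∧
      Module.finrank F D = k - h ∧
      (∀ c ∈ D, c ≠ 0 → d ≤ hwt c) ∧
      D ⊓ sGaloisDual p s D = ⊥ ∧
      sGaloisHull p s C ⊔ D = C ∧
      sGaloisHull p s C ⊓ D = ⊥ := by
  classical
  have hp : p.Prime := Fact.out
  set R := sGaloisHull p s C with hRdef
  have hRC : R ≤ C := inf_le_left
  -- a complement D₀ of R inside C
  obtain ⟨q0, hq0⟩ := Submodule.exists_isCompl (R.comap C.subtype)
  set D₀ : Submodule F (Fin n → F) := q0.map C.subtype with hD₀def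
  have hD₀C : D₀ ≤ C := Submodule.map_subtype_le _ _
  have hinf : D₀ ⊓ R = ⊥ := by
    rw [eq_bot_iff]
    rintro x ⟨hxD, hxR⟩
    obtain ⟨y, hyq, rfl⟩ := hxD
    have hy : y ∈ R.comap C.subtype ⊓ q0 := ⟨hxR, hyq⟩
    rw [hq0.inf_eq_bot] at hy
    rw [Submodule.mem_bot] at hy
    simp [hy]
  have hsup : D₀ ⊔ R = C := by
    have h1 : (R.comap C.subtype).map C.subtype = R := by
      rw [Submodule.map_comap_subtype, inf_eq_right.mpr hRC]
    calc D₀ ⊔ R = (q0 ⊔ R.comap C.subtype).map C.subtype := by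
          rw [Submodule.map_sup, h1]
      _ = C := by rw [sup_comm, hq0.sup_eq_top, Submodule.map_top, Submodule.range_subtype]
  -- Frobenius facts
  have hppos : p ^ s ≠ 0 := pow_ne_zero _ hp.ne_zero
  have hpow : ∀ a : F, (a ^ p ^ s) ^ p ^ (m - s) = a := by
    intro a
    rw [← pow_mul, ← pow_add, Nat.add_sub_cancel' hs.le, ← hcard, FiniteField.pow_card]
  have hpow' : ∀ a : F, (a ^ p ^ (m - s)) ^ p ^ s = a := by
    intro a
    rw [← pow_mul, ← pow_add, Nat.sub_add_cancel hs.le, ← hcard, FiniteField.pow_card]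
  have hadd : ∀ x y : F, (x + y) ^ p ^ s = x ^ p ^ s + y ^ p ^ s := fun x y =>
    add_pow_char_pow x y p s
  have hzero : (0 : F) ^ p ^ s = 0 := zero_pow hppos
  have hsurj : ∀ r : F, ∃ b : F, b ^ p ^ s = r := fun r => ⟨r ^ p ^ (m - s), hpow' r⟩
  set Φ : (Fin n → F) → (Fin n → F) := fun y i => y i ^ p ^ s with hΦdef
  have hΦinj : Function.Injective Φ := by
    intro x y hxy
    funext i
    have h1 := congrArg (fun z => z ^ p ^ (m - s)) (congrFun hxy i)
    simpa [hΦdef, hpow] using h1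
  have hΦzero : Φ 0 = 0 := funext fun i => hzero
  -- the image of D₀ under Φ, as a submodule
  set Dstar : Submodule F (Fin n → F) := phiSub hadd hzero hsurj D₀ with hDstardef
  have hmemDstar : ∀ x, x ∈ Dstar ↔ ∃ y ∈ D₀, Φ y = x := fun x => mem_phiSub
  set f0 : ↥Dstar →ₗ[F] Module.Dual F ↥D₀ := pairDual D₀ Dstar with hf0def
  set g0 : ↥Dstar →ₗ[F] Module.Dual F ↥R := pairDual R Dstar with hg0def
  -- joint kernel is trivial
  have hker : ∀ u : ↥Dstar, f0 u = 0 → g0 u = 0 → u = 0 := by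
    rintro ⟨u, hu⟩ hf hg
    obtain ⟨y, hyD, rfl⟩ := (hmemDstar u).mp hu
    have hyC : y ∈ C := hD₀C hyD
    have hydual : y ∈ sGaloisDual p s C := by
      intro c hc
      rw [← hsup] at hc
      obtain ⟨a, ha, b, hb, rfl⟩ := Submodule.mem_sup.mp hc
      have h1 : ∑ i, a i * y i ^ p ^ s = 0 := DFunLike.congr_fun hf ⟨a, ha⟩
      have h2 : ∑ i, b i * y i ^ p ^ s = 0 := DFunLike.congr_fun hg ⟨b, hb⟩
      calc ∑ i, (a + b) i * y i ^ p ^ s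
          = ∑ i, (a i * y i ^ p ^ s + b i * y i ^ p ^ s) := by
            refine Finset.sum_congr rfl fun i _ => ?_
            simp [add_mul]
        _ = 0 := by rw [Finset.sum_add_distrib, h1, h2, add_zero]
    have hy0 : y ∈ D₀ ⊓ R := ⟨hyD, ⟨hyC, hydual⟩⟩
    rw [hinf, Submodule.mem_bot] at hy0
    apply Subtype.ext
    subst hy0
    exact hΦzero
  -- finrank of Dstar equals finrank of D₀
  haveI : Fintype ↥Dstar := Fintype.ofFinite _
  haveI : Fintype ↥D₀ := Fintype.ofFinite _
  have hfr : Module.finrank F ↥Dstar = Module.finrank F ↥D₀ := by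
    have e2 : ↥Dstar ≃ ↥(D₀ : Set (Fin n → F)) :=
      (Equiv.subtypeEquivRight (fun x => Iff.rfl)).trans
        (Equiv.Set.image Φ (D₀ : Set (Fin n → F)) hΦinj).symm
    have hcards : Fintype.card ↥Dstar = Fintype.card ↥D₀ := Fintype.card_congr e2
    rw [Module.card_eq_pow_finrank (K := F) (V := ↥Dstar),
      Module.card_eq_pow_finrank (K := F) (V := ↥D₀)] at hcards
    exact Nat.pow_right_injective Fintype.one_lt_card hcards
  -- finrank of D₀
  have hfrD₀ : Module.finrank F ↥D₀ + h = k := by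
    have h1 := Submodule.finrank_sup_add_finrank_inf_eq D₀ R
    rw [hsup, hinf, hk, hh, finrank_bot] at h1
    omega
  -- the correcting map w
  obtain ⟨w, hw⟩ := exists_w f0 g0 hker hfr
  -- the subcode D
  set j : ↥D₀ →ₗ[F] (Fin n → F) := D₀.subtype + R.subtype.comp w with hjdef
  have hjapp : ∀ x : ↥D₀, j x = (x : Fin n → F) + ((w x : ↥R) : Fin n → F) := fun x => rfl
  set D := LinearMap.range j with hDdef
  have hDC : D ≤ C := by
    rintro x ⟨dd, rfl⟩
    rw [hjapp]
    exact C.add_mem (hD₀C dd.2) (hRC (w dd).2)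
  have hjinj : Function.Injective j := by
    rw [← LinearMap.ker_eq_bot, eq_bot_iff]
    intro x hx
    have hx0 : (x : Fin n → F) + ((w x : ↥R) : Fin n → F) = 0 := hx
    have hxR : (x : Fin n → F) ∈ R := by
      have hneg : (x : Fin n → F) = -((w x : ↥R) : Fin n → F) := by
        rw [eq_neg_iff_add_eq_zero]; exact hx0
      rw [hneg]; exact R.neg_mem (w x).2
    have hx2 : (x : Fin n → F) ∈ D₀ ⊓ R := ⟨x.2, hxR⟩
    rw [hinf, Submodule.mem_bot] at hx2
    rw [Submodule.mem_bot]
    exact Subtype.ext hx2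
  refine ⟨D, hDC, ?_, ?_, ?_, ?_, ?_⟩
  · rw [LinearMap.finrank_range_of_inj hjinj]
    omega
  · intro c hc hc0
    exact hd.2 c (hDC hc) hc0
  · -- D is s-Galois LCD
    rw [eq_bot_iff]
    rintro x ⟨hxD, hxdual⟩
    obtain ⟨dd, rfl⟩ := hxD
    set u : ↥Dstar := ⟨Φ (dd : Fin n → F),
      (hmemDstar _).mpr ⟨(dd : Fin n → F), dd.2, rfl⟩⟩ with hudef
    have key : ∀ d' : ↥D₀, f0 u d' + g0 u (w d') = 0 := by
      intro d'
      have hβ : ∑ i, (j d') i * (j dd) i ^ p ^ s = 0 := hxdual (j d') ⟨d', rfl⟩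
      have hsplit : ∀ i, (j dd) i ^ p ^ s
          = (dd : Fin n → F) i ^ p ^ s + ((w dd : ↥R) : Fin n → F) i ^ p ^ s := by
        intro i
        rw [hjapp]
        exact hadd _ _
      have hvanish : ∑ i, (j d') i * ((w dd : ↥R) : Fin n → F) i ^ p ^ s = 0 :=
        (w dd).2.2 (j d') (hDC ⟨d', rfl⟩)
      have hβ' : ∑ i, (j d') i * (dd : Fin n → F) i ^ p ^ s = 0 := by
        have hsum : ∑ i, (j d') i * (j dd) i ^ p ^ s
            = ∑ i, (j d') i * (dd : Fin n → F) i ^ p ^ s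
              + ∑ i, (j d') i * ((w dd : ↥R) : Fin n → F) i ^ p ^ s := by
          rw [← Finset.sum_add_distrib]
          refine Finset.sum_congr rfl fun i _ => ?_
          rw [hsplit i, mul_add]
        rw [hβ, hvanish, add_zero] at hsum
        exact hsum.symm
      have hval : f0 u d' + g0 u (w d')
          = ∑ i, (j d') i * (dd : Fin n → F) i ^ p ^ s := by
        rw [hf0def, hg0def, pairDual_apply, pairDual_apply]
        rw [← Finset.sum_add_distrib]
        refine Finset.sum_congr rfl fun i _ => ?_
        rw [hjapp]
        simp only [hudef, hΦdef, Pi.add_apply]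
        ring
      rw [hval]
      exact hβ'
    have hu0 : u = 0 := hw u key
    have hΦ0 : Φ (dd : Fin n → F) = 0 := by
      simpa [hudef, Subtype.ext_iff] using hu0
    have hdd0 : dd = 0 := by
      apply Subtype.ext
      exact hΦinj (hΦ0.trans hΦzero.symm)
    rw [hdd0, map_zero]
    exact Submodule.zero_mem _
  · -- Hull ⊔ D = C
    apply le_antisymm
    · exact sup_le hRC hDC
    · rw [← hsup]
      apply sup_le
      · intro x hx
        have hx' : x = -(((w ⟨x, hx⟩ : ↥R) : Fin n → F)) + j ⟨x, hx⟩ := by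
          rw [hjapp]; ring
        rw [hx']
        exact Submodule.add_mem _
          (le_sup_left (α := Submodule F (Fin n → F))
            (R.neg_mem (w ⟨x, hx⟩).2))
          (le_sup_right (α := Submodule F (Fin n → F)) ⟨⟨x, hx⟩, rfl⟩)
      · exact le_sup_left
  · -- Hull ⊓ D = ⊥
    rw [eq_bot_iff]
    rintro x ⟨hxR, dd, rfl⟩
    have hddR : (dd : Fin n → F) ∈ R := by
      have hsub : (dd : Fin n → F) = j dd - ((w dd : ↥R) : Fin n → F) := by
        rw [hjapp]; ring
      rw [hsub]
      exact R.sub_mem hxR (w dd).2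
    have hdd2 : (dd : Fin n → F) ∈ D₀ ⊓ R := ⟨dd.2, hddR⟩
    rw [hinf, Submodule.mem_bot] at hdd2
    have hdd0 : dd = 0 := Subtype.ext hdd2
    rw [hdd0, map_zero]
    exact Submodule.zero_mem _

end
end

section
/- Let q = p^m with p prime and let 0 ≤ s < m. Let C be an [n,k]_q linear code over F_q with generator matrix G (a k×n matrix over F_q whose rows form a basis of C). Then C is an s-Galois LCD code (that is, C ∩ C^{⊥_s} = {0}) if and only if the k×k matrix G·(G^{(p^{m-s})})^T is nonsingular, where G^{(p^{m-s})} denotes the matrix obtained from G by raising every entry to the p^{m-s}-th power. -/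
open Finset Matrix

noncomputable section

/-- A code `C` with generator matrix `G` is `s`-Galois LCD iff
`G · (G^{(p^{m-s})})ᵀ` is nonsingular. -/
theorem galois_lcd_iff_generator_matrix
    {p m s : ℕ} [Fact p.Prime] (hs : s < m)
    {F : Type*} [Field F] [Fintype F] [CharP F p] (hcard : Fintype.card F = p ^ m)
    {n k : ℕ} (C : Submodule F (Fin n → F)) (G : Matrix (Fin k) (Fin n) F)
    (hind : LinearIndependent F (fun i : Fin k => G i))
    (hspan : Submodule.span F (Set.range fun i : Fin k => G i) = C) :
    C ⊓ sGaloisDual p s C = ⊥ ↔ IsUnit (G * (G.map fun x => x ^ p ^ (m - s))ᵀ) := by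
  classical
  have hp : p.Prime := Fact.out
  set M := G * (G.map fun x => x ^ p ^ (m - s))ᵀ with hM
  have hMapp : ∀ i j, M i j = ∑ t, G i t * (G j t) ^ p ^ (m - s) := by
    intro i j
    simp [hM, Matrix.mul_apply, Matrix.transpose_apply, Matrix.map_apply]
  have hpm : ∀ x : F, x ^ p ^ m = x := fun x => by
    rw [← hcard]; exact FiniteField.pow_card x
  have hexp : p ^ (m - s) * p ^ s = p ^ m := by
    rw [← pow_add]; congr 1; omega
  have hφinj : Function.Injective fun x : F => x ^ p ^ s := by
    have := (iterateFrobenius F p s).injective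
    intro x y h
    exact this (by simpa [iterateFrobenius_def] using h)
  have hφzero : ∀ x : F, x ^ p ^ s = 0 ↔ x = 0 := fun x => by
    constructor
    · intro h; exact hφinj (by simpa [zero_pow (pow_ne_zero s hp.ne_zero)] using h)
    · rintro rfl; exact zero_pow (pow_ne_zero s hp.ne_zero)
  -- φ of M entries
  have hMφ : ∀ i j, (M i j) ^ p ^ s = ∑ t, (G i t) ^ p ^ s * G j t := by
    intro i j
    rw [hMapp]
    rw [show ((∑ t, G i t * (G j t) ^ p ^ (m - s)) ^ p ^ s)
        = (iterateFrobenius F p s) (∑ t, G i t * (G j t) ^ p ^ (m - s)) from rfl]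
    rw [map_sum]
    refine Finset.sum_congr rfl fun t _ => ?_
    rw [_root_.map_mul, iterateFrobenius_def, iterateFrobenius_def, ← pow_mul, hexp, hpm]
  -- membership in dual reduces to rows
  have hrow : ∀ i : Fin k, G i ∈ C := fun i => by
    rw [← hspan]; exact Submodule.subset_span ⟨i, rfl⟩
  have dualmem : ∀ x : Fin n → F, x ∈ sGaloisDual p s C ↔
      ∀ j : Fin k, ∑ t, G j t * x t ^ p ^ s = 0 := by
    intro x
    constructor
    · intro hx j; exact hx (G j) (hrow j)
    · intro h c hc
      rw [← hspan] at hc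
      induction hc using Submodule.span_induction with
      | mem c hc => obtain ⟨j, rfl⟩ := hc; exact h j
      | zero => simp
      | add c d _ _ hc hd =>
        simp only [Pi.add_apply, add_mul, Finset.sum_add_distrib, hc, hd, add_zero]
      | smul r c _ hc =>
        simp only [Pi.smul_apply, smul_eq_mul, mul_assoc, ← Finset.mul_sum, hc, mul_zero]
  -- vecMul a G as sum
  have hvec : ∀ a : Fin k → F, Matrix.vecMul a G = ∑ i, a i • G i := by
    intro a; funext t
    simp [Matrix.vecMul, dotProduct, Finset.sum_apply]
  have keyA : ∀ a : Fin k → F,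
      (Matrix.vecMul a G ∈ sGaloisDual p s C) ↔ Matrix.vecMul a M = 0 := by
    intro a
    rw [dualmem]
    have hstep : ∀ j : Fin k,
        ∑ t, G j t * (Matrix.vecMul a G) t ^ p ^ s = (Matrix.vecMul a M j) ^ p ^ s := by
      intro j
      have h1 : ∀ t, (Matrix.vecMul a G) t ^ p ^ s = ∑ i, (a i) ^ p ^ s * (G i t) ^ p ^ s := by
        intro t
        rw [show ((Matrix.vecMul a G) t ^ p ^ s)
            = (iterateFrobenius F p s) ((Matrix.vecMul a G) t) from rfl]
        rw [show (Matrix.vecMul a G) t = ∑ i, a i * G i t by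
          simp [Matrix.vecMul, dotProduct]]
        rw [map_sum]
        exact Finset.sum_congr rfl fun i _ => by rw [_root_.map_mul]; rfl
      calc ∑ t, G j t * (Matrix.vecMul a G) t ^ p ^ s
          = ∑ t, ∑ i, (a i) ^ p ^ s * ((G i t) ^ p ^ s * G j t) := by
            refine Finset.sum_congr rfl fun t _ => ?_
            rw [h1, Finset.mul_sum]
            exact Finset.sum_congr rfl fun i _ => by ring
        _ = ∑ i, (a i) ^ p ^ s * ∑ t, (G i t) ^ p ^ s * G j t := by
            rw [Finset.sum_comm]
            exact Finset.sum_congr rfl fun i _ => by rw [Finset.mul_sum]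
        _ = ∑ i, (a i) ^ p ^ s * (M i j) ^ p ^ s := by
            exact Finset.sum_congr rfl fun i _ => by rw [hMφ]
        _ = ∑ i, (a i * M i j) ^ p ^ s := by
            exact Finset.sum_congr rfl fun i _ => (mul_pow _ _ _).symm
        _ = (∑ i, a i * M i j) ^ p ^ s := by
            rw [show (∑ i, a i * M i j) ^ p ^ s
              = (iterateFrobenius F p s) (∑ i, a i * M i j) from rfl, map_sum]; rfl
        _ = (Matrix.vecMul a M j) ^ p ^ s := by
            simp [Matrix.vecMul, dotProduct]
    constructor
    · intro h
      funext j
      have := h j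
      rw [hstep j, hφzero] at this
      simpa using this
    · intro h j
      rw [hstep j, h]
      simp [zero_pow (pow_ne_zero s hp.ne_zero)]
  have hvG_mem : ∀ a : Fin k → F, Matrix.vecMul a G ∈ C := by
    intro a
    rw [hvec, ← hspan]
    exact Submodule.sum_mem _ fun i _ => Submodule.smul_mem _ _ (Submodule.subset_span ⟨i, rfl⟩)
  have hindep := Fintype.linearIndependent_iff.mp hind
  constructor
  · intro hLCD
    rw [Matrix.isUnit_iff_isUnit_det, isUnit_iff_ne_zero]
    intro hdet
    obtain ⟨a, ha, haM⟩ := Matrix.exists_vecMul_eq_zero_iff.mpr hdet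
    have hv : Matrix.vecMul a G ∈ C ⊓ sGaloisDual p s C :=
      ⟨hvG_mem a, (keyA a).mpr haM⟩
    rw [hLCD, Submodule.mem_bot, hvec] at hv
    exact ha (funext (hindep a hv))
  · intro hM'
    rw [eq_bot_iff]
    rintro x ⟨hxC, hxD⟩
    rw [← hspan] at hxC
    obtain ⟨a, ha⟩ := (Submodule.mem_span_range_iff_exists_fun F).mp hxC
    have hx : x = Matrix.vecMul a G := by rw [hvec, ha]
    rw [hx] at hxD
    have haM : Matrix.vecMul a M = 0 := (keyA a).mp hxD
    have hdet : M.det ≠ 0 := by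
      rw [← isUnit_iff_ne_zero, ← Matrix.isUnit_iff_isUnit_det]; exact hM'
    have : ¬ ∃ a ≠ 0, Matrix.vecMul a M = 0 := by
      rw [Matrix.exists_vecMul_eq_zero_iff]; exact fun h => hdet h
    have ha0 : a = 0 := by
      by_contra hne
      exact this ⟨a, hne, haM⟩
    rw [Submodule.mem_bot, hx, ha0]
    simp [Matrix.vecMul]

end
end

section
/- Let C_i be an [n,k_i,d_i]_q nonzero linear code over F_q for 1 ≤ i ≤ l, and let A be a full-row-rank l×t matrix over F_q with l ≤ t. Then the matrix-product code C = [C_1,…,C_l]A is a linear code over F_q of length nt with dimension Σ_{i=1}^l k_i, and its minimum Hamming weight satisfies d(C) ≥ min{ d_1·d(U_A(1)), d_2·d(U_A(2)), …, d_l·d(U_A(l)) }, where U_A(i) denotes the linear code in F_q^t spanned by the first i rows of A and d(U_A(i)) its minimum Hamming weight. -/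
open Finset Matrix

noncomputable section

section MPCAux
lemma hwt_eq {G : Type*} [Zero G] [DecidableEq G] {κ : Type*} [Fintype κ] (x : κ → G) :
    hwt x = (Finset.univ.filter fun i => x i ≠ 0).card := by
  rw [hwt, Set.ncard_eq_toFinset_card']
  simp [Set.toFinset_setOf]

def mpcMap {F : Type*} [Field F] {n l t : ℕ} (C : Fin l → Submodule F (Fin n → F))
    (A : Matrix (Fin l) (Fin t) F) : (∀ u : Fin l, ↥(C u)) →ₗ[F] (Fin t × Fin n → F) where
  toFun c := fun p => ∑ u, A u p.1 * (c u : Fin n → F) p.2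
  map_add' a b := by
    funext p
    simp [mul_add, Finset.sum_add_distrib]
  map_smul' r a := by
    funext p
    simp only [Pi.smul_apply, SetLike.val_smul, smul_eq_mul, RingHom.id_apply, Finset.mul_sum]
    exact Finset.sum_congr rfl fun u _ => by ring

end MPCAux

/-- Parameters of a matrix-product code `[C_1,…,C_l]A` for an FRR matrix `A`:
length `nt`, dimension `∑ k_i`, and
`d(C) ≥ min_i { d_i · d(U_A(i)) }`. -/
theorem matrixProduct_params
    {F : Type*} [Field F] {n l t : ℕ} (hl : 0 < l) (hlt : l ≤ t)
    (C : Fin l → Submodule F (Fin n → F)) (k d : Fin l → ℕ)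
    (hk : ∀ u, Module.finrank F (C u) = k u) (hd : ∀ u, minHWt (C u) (d u))
    (A : Matrix (Fin l) (Fin t) F)
    (hA : LinearIndependent F (fun u : Fin l => A u)) :
    Module.finrank F (matrixProductCode C A) = ∑ u, k u ∧
    ∀ c ∈ matrixProductCode C A, c ≠ 0 →
      Finset.univ.inf' ⟨⟨0, hl⟩, Finset.mem_univ _⟩
        (fun u : Fin l => d u * minDist (UA A ((u : ℕ) + 1))) ≤ hwt c := by
  classical
  have key := Fintype.linearIndependent_iff.mp hA
  constructor
  · -- dimension
    have hrange : matrixProductCode C A = LinearMap.range (mpcMap C A) := by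
      ext x
      constructor
      · rintro ⟨c, hc, hx⟩
        refine ⟨fun u => ⟨c u, hc u⟩, ?_⟩
        funext p
        exact (hx p.1 p.2).symm
      · rintro ⟨c, rfl⟩
        exact ⟨fun u => (c u : Fin n → F), fun u => (c u).2, fun j i => rfl⟩
    have hinj : Function.Injective (mpcMap C A) := by
      rw [← LinearMap.ker_eq_bot, eq_bot_iff]
      intro a ha
      have hz : ∀ u i, (a u : Fin n → F) i = 0 := by
        intro u i
        refine key (fun v => (a v : Fin n → F) i) ?_ u
        funext j
        have h0 := congrFun (LinearMap.mem_ker.mp ha) (j, i)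
        simp only [mpcMap, LinearMap.coe_mk, AddHom.coe_mk, Pi.zero_apply] at h0
        simp only [Finset.sum_apply, Pi.smul_apply, smul_eq_mul, Pi.zero_apply]
        rw [← h0]
        exact Finset.sum_congr rfl fun v _ => by ring
      simp only [Submodule.mem_bot]
      funext u
      apply Subtype.ext
      funext i
      simpa using hz u i
    rw [hrange, LinearMap.finrank_range_of_inj hinj, Module.finrank_pi_fintype]
    exact Finset.sum_congr rfl fun u _ => hk u
  · -- distance
    intro x hx hx0
    obtain ⟨c, hc, hxc⟩ := hx
    set T : Finset (Fin l) := univ.filter fun u => c u ≠ 0 with hT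
    have hTne : T.Nonempty := by
      by_contra h
      apply hx0
      have hz : ∀ u, c u = 0 := by
        intro u
        by_contra hcu
        exact h ⟨u, by simp [hT, hcu]⟩
      funext p
      rw [show x p = x (p.1, p.2) from rfl, hxc p.1 p.2]
      simp [hz]
    set u0 := T.max' hTne with hu0def
    have hu0 : c u0 ≠ 0 :=
      (Finset.mem_filter.mp (T.max'_mem hTne)).2
    have hmax : ∀ v, u0 < v → c v = 0 := by
      intro v hv
      by_contra hcv
      exact absurd (T.le_max' v (by simp [hT, hcv])) (not_le.mpr hv)
    set D := minDist (UA A ((u0 : ℕ) + 1)) with hD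
    have hrow_mem : ∀ i : Fin n, (fun j => x (j, i)) ∈ UA A ((u0 : ℕ) + 1) := by
      intro i
      have heq : (fun j => x (j, i)) = ∑ v, c v i • A v := by
        funext j
        simp only [Finset.sum_apply, Pi.smul_apply, smul_eq_mul]
        rw [hxc j i]
        exact Finset.sum_congr rfl fun v _ => by ring
      rw [heq]
      apply Submodule.sum_mem
      intro v _
      by_cases hv : (v : ℕ) < (u0 : ℕ) + 1
      · exact Submodule.smul_mem _ _ (Submodule.subset_span ⟨v, hv, rfl⟩)
      · have : c v = 0 := hmax v (Fin.lt_def.mpr (by omega))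
        simp [this]
    have hrow_ne : ∀ i : Fin n, c u0 i ≠ 0 → (fun j => x (j, i)) ≠ (0 : Fin t → F) := by
      intro i hi h0
      apply hi
      refine key (fun v => c v i) ?_ u0
      funext j
      have h1 := congrFun h0 j
      simp only [Pi.zero_apply] at h1 ⊢
      simp only [Finset.sum_apply, Pi.smul_apply, smul_eq_mul]
      rw [hxc j i] at h1
      rw [← h1]
      exact Finset.sum_congr rfl fun v _ => by ring
    have hDle : ∀ i : Fin n, c u0 i ≠ 0 → D ≤ hwt (fun j => x (j, i)) := by
      intro i hi
      exact Nat.sInf_le ⟨fun j => x (j, i), ⟨hrow_mem i, hrow_ne i hi⟩, rfl⟩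
    have hsplit : hwt x = ∑ i : Fin n, hwt (fun j => x (j, i)) := by
      rw [hwt_eq, Finset.card_filter, ← Finset.univ_product_univ, Finset.sum_product,
        Finset.sum_comm]
      simp [hwt_eq, Finset.card_filter]
    set S : Finset (Fin n) := univ.filter fun i => c u0 i ≠ 0 with hS
    have h1 : d u0 * D ≤ hwt x := by
      calc d u0 * D ≤ hwt (c u0) * D :=
            Nat.mul_le_mul_right D ((hd u0).2 (c u0) (hc u0) hu0)
        _ = ∑ _i ∈ S, D := by rw [Finset.sum_const, smul_eq_mul, hwt_eq]
        _ ≤ ∑ i ∈ S, hwt (fun j => x (j, i)) :=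
            Finset.sum_le_sum fun i hi => hDle i (by simpa [hS] using hi)
        _ ≤ ∑ i : Fin n, hwt (fun j => x (j, i)) :=
            Finset.sum_le_sum_of_subset (Finset.filter_subset _ _)
        _ = hwt x := hsplit.symm
    exact le_trans (Finset.inf'_le _ (Finset.mem_univ u0)) h1


end
end

section
/- Let A be a nonsingular l×l matrix over F_q and let C_1,…,C_l ⊆ F_q^n be linear codes over F_q. Then the Euclidean dual of the matrix-product code satisfies ([C_1,…,C_l]A)^⊥ = [C_1^⊥,…,C_l^⊥](A^{-1})^T. -/
open Finset Matrix

noncomputable section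

lemma mem_euclDual' {F : Type*} [Field F] {ι : Type*} [Fintype ι] {C : Submodule F (ι → F)}
    {x : ι → F} : x ∈ euclDual C ↔ ∀ c ∈ C, ∑ i, c i * x i = 0 := Iff.rfl

lemma mem_matrixProductCode' {F : Type*} [Field F] {n l t : ℕ}
    {C : Fin l → Submodule F (Fin n → F)} {A : Matrix (Fin l) (Fin t) F}
    {x : Fin t × Fin n → F} :
    x ∈ matrixProductCode C A ↔ ∃ c : Fin l → Fin n → F, (∀ u, c u ∈ C u) ∧
      ∀ j i, x (j, i) = ∑ u, A u j * c u i := Iff.rfl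

/-- Euclidean dual of a matrix-product code with nonsingular `A`:
`([C_1,…,C_l]A)^⊥ = [C_1^⊥,…,C_l^⊥](A⁻¹)ᵀ`. -/
theorem matrixProduct_dual
    {F : Type*} [Field F] {n l : ℕ}
    (C : Fin l → Submodule F (Fin n → F))
    (A : Matrix (Fin l) (Fin l) F) (hA : IsUnit A) :
    euclDual (matrixProductCode C A) =
      matrixProductCode (fun u => euclDual (C u)) (A⁻¹)ᵀ := by
  have hAdet : IsUnit A.det := (Matrix.isUnit_iff_isUnit_det A).mp hA
  have hinv : A⁻¹ * A = 1 := Matrix.nonsing_inv_mul A hAdet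
  have hinv' : A * A⁻¹ = 1 := Matrix.mul_nonsing_inv A hAdet
  ext x
  rw [mem_euclDual', mem_matrixProductCode']
  constructor
  · intro hx
    refine ⟨fun v i => ∑ j, A v j * x (j, i), fun v => ?_, fun j i => ?_⟩
    · intro c₀ hc₀
      have hy : (fun p : Fin l × Fin n => A v p.1 * c₀ p.2) ∈ matrixProductCode C A := by
        refine ⟨fun u => if u = v then c₀ else 0, fun u => ?_, fun j i => ?_⟩
        · by_cases h : u = v
          · simpa [h] using hc₀
          · simp [h]
        · simp [apply_ite (fun f : Fin n → F => f i), mul_ite, Finset.sum_ite_eq']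
      have h0 := hx _ hy
      rw [Fintype.sum_prod_type] at h0
      calc ∑ i, c₀ i * ∑ j, A v j * x (j, i)
          = ∑ i, ∑ j, A v j * c₀ i * x (j, i) := by
            refine Finset.sum_congr rfl fun i _ => ?_
            rw [Finset.mul_sum]
            exact Finset.sum_congr rfl fun j _ => by ring
        _ = ∑ j, ∑ i, A v j * c₀ i * x (j, i) := Finset.sum_comm
        _ = 0 := by simpa using h0
    · symm
      calc ∑ v, (A⁻¹)ᵀ v j * ∑ k, A v k * x (k, i)
          = ∑ v, ∑ k, A⁻¹ j v * A v k * x (k, i) := by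
            refine Finset.sum_congr rfl fun v _ => ?_
            rw [Matrix.transpose_apply, Finset.mul_sum]
            exact Finset.sum_congr rfl fun k _ => by ring
        _ = ∑ k, (∑ v, A⁻¹ j v * A v k) * x (k, i) := by
            rw [Finset.sum_comm]
            exact Finset.sum_congr rfl fun k _ => (Finset.sum_mul _ _ _).symm
        _ = ∑ k, (A⁻¹ * A) j k * x (k, i) := by
            simp only [Matrix.mul_apply]
        _ = x (j, i) := by
            rw [hinv]
            simp [Matrix.one_apply, ite_mul]
  · rintro ⟨d, hd, hx⟩ c ⟨e, he, hc⟩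
    have step : ∀ i, ∑ j, c (j, i) * x (j, i) = ∑ u, e u i * d u i := by
      intro i
      calc ∑ j, c (j, i) * x (j, i)
          = ∑ j, ∑ u, ∑ v, (A u j * A⁻¹ j v) * (e u i * d v i) := by
            refine Finset.sum_congr rfl fun j _ => ?_
            rw [hc, hx, Finset.sum_mul_sum]
            exact Finset.sum_congr rfl fun u _ => Finset.sum_congr rfl fun v _ => by
              rw [Matrix.transpose_apply]; ring
        _ = ∑ u, ∑ v, ∑ j, (A u j * A⁻¹ j v) * (e u i * d v i) := by
            rw [Finset.sum_comm]
            exact Finset.sum_congr rfl fun u _ => Finset.sum_comm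
        _ = ∑ u, ∑ v, (A * A⁻¹) u v * (e u i * d v i) := by
            simp only [Matrix.mul_apply, Finset.sum_mul]
        _ = ∑ u, e u i * d u i := by
            rw [hinv']
            simp [Matrix.one_apply, ite_mul]
    calc ∑ p : Fin l × Fin n, c p * x p
        = ∑ j, ∑ i, c (j, i) * x (j, i) := Fintype.sum_prod_type _
      _ = ∑ i, ∑ j, c (j, i) * x (j, i) := Finset.sum_comm
      _ = ∑ i, ∑ u, e u i * d u i := Finset.sum_congr rfl fun i _ => step i
      _ = ∑ u, ∑ i, e u i * d u i := Finset.sum_comm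
      _ = 0 := Finset.sum_eq_zero fun u _ => hd u (e u) (he u)

end
end

section
/- Let A be a nonsingular l×l matrix over F_q and let C_1,…,C_l ⊆ F_q^n be linear codes with Euclidean dual codes C_i^⊥ all nonzero, and let d_i^⊥ denote the minimum Hamming weight of C_i^⊥. Then the Euclidean dual C^⊥ of the matrix-product code C = [C_1,…,C_l]A satisfies d(C^⊥) ≥ min{ d_1^⊥·d(U_{(A^{-1})^T}(1)), d_2^⊥·d(U_{(A^{-1})^T}(2)), …, d_l^⊥·d(U_{(A^{-1})^T}(l)) }, where U_B(i) denotes the linear code in F_q^l spanned by the first i rows of the matrix B and d(U_B(i)) its minimum Hamming weight. -/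
open Finset Matrix

noncomputable section

lemma hwt_eq_card {G : Type*} [Zero G] {κ : Type*} [Fintype κ] (x : κ → G)
    [DecidablePred fun i => x i ≠ 0] :
    hwt x = (Finset.univ.filter fun i => x i ≠ 0).card := by
  rw [hwt, ← Set.ncard_coe_finset]
  congr 1
  ext i
  simp

lemma mem_euclDual_iff {F : Type*} [Field F] {ι : Type*} [Fintype ι]
    (C : Submodule F (ι → F)) (x : ι → F) :
    x ∈ euclDual C ↔ ∀ c ∈ C, ∑ i, c i * x i = 0 := Iff.rfl

/-- Minimum-distance bound for the dual of a matrix-product code: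
`d(C^⊥) ≥ min_i { d_i^⊥ · d(U_{(A⁻¹)ᵀ}(i)) }`. -/
theorem matrixProduct_dual_dist
    {F : Type*} [Field F] {n l : ℕ} (hl : 0 < l)
    (C : Fin l → Submodule F (Fin n → F)) (d' : Fin l → ℕ)
    (hd : ∀ u, minHWt (euclDual (C u)) (d' u))
    (A : Matrix (Fin l) (Fin l) F) (hA : IsUnit A) :
    ∀ c ∈ euclDual (matrixProductCode C A), c ≠ 0 →
      Finset.univ.inf' ⟨⟨0, hl⟩, Finset.mem_univ _⟩
        (fun u : Fin l => d' u * minDist (UA (A⁻¹)ᵀ ((u : ℕ) + 1))) ≤ hwt c := by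
  classical
  intro x hx hx0
  have hdet : IsUnit A.det := (Matrix.isUnit_iff_isUnit_det A).mp hA
  have hAiA : A⁻¹ * A = 1 := Matrix.nonsing_inv_mul A hdet
  set B := (A⁻¹)ᵀ with hBdef
  set b : Fin l → Fin n → F := fun u i => ∑ j, A u j * x (j, i) with hb
  have hrecover : ∀ j i, x (j, i) = ∑ u, A⁻¹ j u * b u i := by
    intro j i
    have h1 : ∑ u, A⁻¹ j u * b u i = ∑ k, (A⁻¹ * A) j k * x (k, i) := by
      simp only [hb, Finset.mul_sum, Matrix.mul_apply, Finset.sum_mul]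
      rw [Finset.sum_comm]
      exact Finset.sum_congr rfl fun k _ => Finset.sum_congr rfl fun u _ => by ring
    rw [h1, hAiA]
    simp [Matrix.one_apply]
  have hbdual : ∀ u, b u ∈ euclDual (C u) := by
    intro u
    rw [mem_euclDual_iff]
    intro c hc
    have hy : (fun p : Fin l × Fin n => A u p.1 * c p.2) ∈ matrixProductCode C A := by
      refine ⟨fun v => if v = u then c else 0, fun v => ?_, fun j i => ?_⟩
      · by_cases hvu : v = u
        · simpa [hvu] using hc
        · simp [hvu]
      · simp only [ite_apply, Pi.zero_apply, mul_ite, mul_zero, Finset.sum_ite_eq',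
          Finset.mem_univ, if_true]
    have h0 := hx _ hy
    rw [Fintype.sum_prod_type] at h0
    calc ∑ i, c i * b u i = ∑ j, ∑ i, A u j * c i * x (j, i) := by
          simp only [hb, Finset.mul_sum]
          rw [Finset.sum_comm]
          exact Finset.sum_congr rfl fun i _ => Finset.sum_congr rfl fun j _ => by ring
      _ = 0 := by simpa using h0
  have hbne : ∃ u, b u ≠ 0 := by
    by_contra h
    push_neg at h
    apply hx0
    funext p
    obtain ⟨j, i⟩ := p
    rw [show x (j, i) = _ from hrecover j i]
    simp [h]
  set S : Finset (Fin l) := Finset.univ.filter (fun u => b u ≠ 0) with hS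
  have hSne : S.Nonempty := by
    obtain ⟨u, hu⟩ := hbne
    exact ⟨u, by simp [hS, hu]⟩
  set r := S.max' hSne with hr
  have hbr : b r ≠ 0 := by
    have h : r ∈ S := S.max'_mem hSne
    rw [hS] at h
    exact (Finset.mem_filter.mp h).2
  have hbu0 : ∀ u : Fin l, r < u → b u = 0 := by
    intro u hu
    by_contra h
    exact absurd (S.le_max' u (by simp [hS, h])) (not_le.mpr hu)
  set v : Fin n → Fin l → F := fun i j => x (j, i) with hv
  have hvspan : ∀ i, v i ∈ UA B ((r : ℕ) + 1) := by
    intro i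
    have hveq : v i = ∑ u, b u i • B u := by
      funext j
      simp only [hv, Finset.sum_apply, Pi.smul_apply, smul_eq_mul]
      rw [hrecover j i]
      exact Finset.sum_congr rfl fun u _ => by
        rw [hBdef, Matrix.transpose_apply]; ring
    rw [hveq]
    refine Submodule.sum_mem _ fun u _ => ?_
    by_cases hur : u ≤ r
    · exact Submodule.smul_mem _ _ (Submodule.subset_span
        ⟨u, Nat.lt_succ_of_le (show (u : ℕ) ≤ (r : ℕ) from hur), rfl⟩)
    · rw [hbu0 u (not_le.mp hur)]
      simp
  have hvne : ∀ i, b r i ≠ 0 → v i ≠ 0 := by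
    intro i hbi hvi
    apply hbi
    have h1 : b r i = ∑ j, A r j * v i j := rfl
    rw [h1, hvi]
    simp
  have hmd : ∀ i, b r i ≠ 0 → minDist (UA B ((r : ℕ) + 1)) ≤ hwt (v i) := by
    intro i hbi
    exact Nat.sInf_le ⟨v i, ⟨hvspan i, hvne i hbi⟩, rfl⟩
  set S' : Finset (Fin n) := Finset.univ.filter (fun i => b r i ≠ 0) with hS'
  have hcard : hwt (b r) = S'.card := hwt_eq_card _
  have hdr : d' r ≤ hwt (b r) := (hd r).2 (b r) (hbdual r) hbr
  have hkey : ∑ i ∈ S', hwt (v i) ≤ hwt x := by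
    rw [hwt_eq_card x]
    have hsub : S'.biUnion
        (fun i => (Finset.univ.filter fun j => v i j ≠ 0).image (fun j => (j, i)))
        ⊆ Finset.univ.filter (fun p => x p ≠ 0) := by
      intro p hp
      simp only [Finset.mem_biUnion, Finset.mem_image, Finset.mem_filter, Finset.mem_univ,
        true_and] at hp ⊢
      obtain ⟨i, _, j, hj, rfl⟩ := hp
      exact hj
    have hinj : ∀ i : Fin n, Function.Injective (fun j : Fin l => (j, i)) := by
      intro i a b h
      exact (Prod.mk.injEq _ _ _ _).mp h |>.1
    have hdisj : (S' : Set (Fin n)).PairwiseDisjoint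
        (fun i => (Finset.univ.filter fun j => v i j ≠ 0).image (fun j => (j, i))) := by
      intro i _ i' _ hne
      simp only [Finset.disjoint_left, Finset.mem_image]
      rintro p ⟨j, _, rfl⟩ ⟨j', _, hp⟩
      exact hne ((congrArg Prod.snd hp).symm)
    calc ∑ i ∈ S', hwt (v i)
        = ∑ i ∈ S', ((Finset.univ.filter fun j => v i j ≠ 0).image (fun j => (j, i))).card := by
          refine Finset.sum_congr rfl fun i _ => ?_
          rw [hwt_eq_card, Finset.card_image_of_injective _ (hinj i)]
      _ = (S'.biUnion _).card := (Finset.card_biUnion hdisj).symm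
      _ ≤ _ := Finset.card_le_card hsub
  have hsum : S'.card * minDist (UA B ((r : ℕ) + 1)) ≤ ∑ i ∈ S', hwt (v i) := by
    calc S'.card * minDist (UA B ((r : ℕ) + 1))
        = ∑ _i ∈ S', minDist (UA B ((r : ℕ) + 1)) := by rw [Finset.sum_const, smul_eq_mul]
      _ ≤ ∑ i ∈ S', hwt (v i) := Finset.sum_le_sum fun i hi =>
          hmd i (by simpa [hS'] using hi)
  calc Finset.univ.inf' ⟨⟨0, hl⟩, Finset.mem_univ _⟩
        (fun u : Fin l => d' u * minDist (UA B ((u : ℕ) + 1)))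
      ≤ d' r * minDist (UA B ((r : ℕ) + 1)) := Finset.inf'_le _ (Finset.mem_univ r)
    _ ≤ hwt (b r) * minDist (UA B ((r : ℕ) + 1)) := Nat.mul_le_mul_right _ hdr
    _ = S'.card * minDist (UA B ((r : ℕ) + 1)) := by rw [hcard]
    _ ≤ ∑ i ∈ S', hwt (v i) := hsum
    _ ≤ hwt x := hkey

end
end

section
/- Let q = p^m with p an odd prime, let s be a positive integer with 2s | m, and let n = r(q−1)/(p^s−1) for some integer 1 ≤ r ≤ p^s−1. Then for every integer k with 1 ≤ k ≤ ⌊(p^s+n)/(p^s+1)⌋ and every integer h with 0 ≤ h ≤ k−1, there exists an s-Galois LCD F_q-linear code of length n, dimension k−h and minimum Hamming weight at least n−k+1. -/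
open Finset Matrix

noncomputable section

section GaloisAux

open Finset

variable {F : Type*} [Field F]

private lemma helperA {K : ℕ} {β : Fin K → F} (hβ : Function.Injective β)
    {x : Fin K → F} (hx : ∀ i, ∑ j, x j * β i ^ (j : ℕ) = 0) : x = 0 := by
  classical
  have hdet : (Matrix.vandermonde β).det ≠ 0 :=
    Matrix.det_vandermonde_ne_zero_iff.mpr hβ
  refine Matrix.eq_zero_of_mulVec_eq_zero hdet ?_
  funext i
  have : (Matrix.vandermonde β).mulVec x i = ∑ j, x j * β i ^ (j : ℕ) := by
    simp [Matrix.mulVec, Matrix.vandermonde, dotProduct, mul_comm]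
  rw [this, hx i]; rfl

private lemma helperB {K : ℕ} {β : Fin K → F} (hβ : Function.Injective β)
    {x : Fin K → F} (hx : ∀ j : Fin K, ∑ i, x i * β i ^ (j : ℕ) = 0) : x = 0 := by
  classical
  have hdet : (Matrix.vandermonde β).det ≠ 0 :=
    Matrix.det_vandermonde_ne_zero_iff.mpr hβ
  refine Matrix.eq_zero_of_vecMul_eq_zero hdet ?_
  funext j
  have : Matrix.vecMul x (Matrix.vandermonde β) j = ∑ i, x i * β i ^ (j : ℕ) := by
    simp [Matrix.vecMul, Matrix.vandermonde, dotProduct]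
  rw [this, hx j]; rfl

private lemma filter_lt_eq_map {n K : ℕ} (h : K ≤ n) :
    (Finset.univ.filter (fun i : Fin n => (i : ℕ) < K))
      = Finset.univ.map (Fin.castLEEmb h) := by
  ext i
  rw [Finset.mem_filter, Finset.mem_map]
  constructor
  · intro hi
    refine ⟨⟨(i : ℕ), hi.2⟩, Finset.mem_univ _, ?_⟩
    apply Fin.ext
    simp [Fin.castLEEmb]
  · rintro ⟨a, -, rfl⟩
    exact ⟨Finset.mem_univ _, by simpa [Fin.castLEEmb] using a.isLt⟩

private lemma filter_lt_succ {n t : ℕ} (ht : t < n) :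
    (Finset.univ.filter (fun i : Fin n => (i : ℕ) < t + 1))
      = insert (⟨t, ht⟩ : Fin n) (Finset.univ.filter (fun i : Fin n => (i : ℕ) < t)) := by
  ext i
  simp only [mem_filter, mem_univ, true_and, mem_insert, Fin.ext_iff]
  omega

private def Tmap {K n : ℕ} (a b : Fin n → Fin K → F) (u : Fin n → F) (t : ℕ) :
    (Fin K → F) →ₗ[F] (Fin K → F) where
  toFun x := fun j => ∑ i ∈ Finset.univ.filter (fun i : Fin n => (i : ℕ) < t),
      u i * (∑ j', b i j' * x j') * a i j
  map_add' x y := by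
    funext j
    simp only [Pi.add_apply]
    rw [← Finset.sum_add_distrib]
    refine Finset.sum_congr rfl fun i _ => ?_
    have hinner : (∑ j', b i j' * (x j' + y j'))
        = (∑ j', b i j' * x j') + ∑ j', b i j' * y j' := by
      rw [← Finset.sum_add_distrib]
      exact Finset.sum_congr rfl fun j' _ => mul_add _ _ _
    rw [hinner]; ring
  map_smul' r x := by
    funext j
    simp only [Pi.smul_apply, smul_eq_mul, RingHom.id_apply]
    rw [Finset.mul_sum]
    refine Finset.sum_congr rfl fun i _ => ?_
    have hinner : (∑ j', b i j' * (r * x j')) = r * ∑ j', b i j' * x j' := by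
      rw [Finset.mul_sum]
      exact Finset.sum_congr rfl fun j' _ => by ring
    rw [hinner]; ring

private lemma Tmap_apply {K n : ℕ} (a b : Fin n → Fin K → F) (u : Fin n → F) (t : ℕ)
    (x : Fin K → F) (j : Fin K) :
    Tmap a b u t x j = ∑ i ∈ Finset.univ.filter (fun i : Fin n => (i : ℕ) < t),
      u i * (∑ j', b i j' * x j') * a i j := rfl

private lemma core {K n : ℕ} (hKn : K ≤ n)
    (a b : Fin n → Fin K → F) (S : Set F) (hS0 : (0 : F) ∉ S)
    {s₁ s₂ : F} (hs₁ : s₁ ∈ S) (hs₂ : s₂ ∈ S) (hne : s₁ ≠ s₂)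
    (ha : ∀ w : Fin K → F, (∀ j, ∑ i : Fin K, w i * a (Fin.castLE hKn i) j = 0) → w = 0)
    (hb : ∀ x : Fin K → F, (∀ i : Fin K, ∑ j', x j' * b (Fin.castLE hKn i) j' = 0) → x = 0) :
    ∃ u : Fin n → F, (∀ i, u i ∈ S) ∧
      ∀ x : Fin K → F, (∀ j, ∑ i, u i * (∑ j', b i j' * x j') * a i j = 0) → x = 0 := by
  have H : ∀ t, K ≤ t → t ≤ n → ∃ u : Fin n → F, (∀ i, u i ∈ S) ∧
      ∀ x : Fin K → F, (∀ j, Tmap a b u t x j = 0) → x = 0 := by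
    intro t htK
    induction t, htK using Nat.le_induction with
    | base =>
      intro _
      refine ⟨fun _ => s₁, fun _ => hs₁, fun x hx => ?_⟩
      have hs₁0 : s₁ ≠ 0 := fun h0 => hS0 (h0 ▸ hs₁)
      have hx' : ∀ j, ∑ i : Fin K,
          (s₁ * ∑ j', b (Fin.castLE hKn i) j' * x j') * a (Fin.castLE hKn i) j = 0 := by
        intro j
        have h0 := hx j
        rw [Tmap_apply, filter_lt_eq_map hKn, Finset.sum_map] at h0
        simpa [Fin.castLEEmb] using h0
      have hw := ha (fun i => s₁ * ∑ j', b (Fin.castLE hKn i) j' * x j') hx'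
      refine hb x fun i => ?_
      have h1 : s₁ * ∑ j', b (Fin.castLE hKn i) j' * x j' = 0 := congrFun hw i
      have h2 : (∑ j', b (Fin.castLE hKn i) j' * x j') = 0 := by
        rcases mul_eq_zero.mp h1 with h | h
        · exact absurd h hs₁0
        · exact h
      calc ∑ j', x j' * b (Fin.castLE hKn i) j'
          = ∑ j', b (Fin.castLE hKn i) j' * x j' :=
            Finset.sum_congr rfl fun _ _ => mul_comm _ _
        _ = 0 := h2
    | succ t htK IH =>
      intro htn1
      have htn : t < n := htn1
      obtain ⟨u, hu, hker⟩ := IH (le_of_lt htn)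
      have hinj : Function.Injective (Tmap a b u t) := by
        intro x y hxy
        have h0 : Tmap a b u t (x - y) = 0 := by rw [map_sub, hxy, sub_self]
        have := hker (x - y) (fun j => by rw [h0]; rfl)
        exact sub_eq_zero.mp this
      obtain ⟨y, hy⟩ := LinearMap.surjective_of_injective hinj (a ⟨t, htn⟩)
      set c : F := ∑ j', b ⟨t, htn⟩ j' * y j' with hc
      obtain ⟨s, hsS, hsc⟩ : ∃ s ∈ S, 1 + s * c ≠ 0 := by
        by_cases hc0 : c = 0
        · exact ⟨s₁, hs₁, by simp [hc0]⟩
        · by_cases h1 : 1 + s₁ * c = 0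
          · refine ⟨s₂, hs₂, fun h2 => hne ?_⟩
            have h3 : s₁ * c = s₂ * c := by linear_combination h1 - h2
            exact mul_right_cancel₀ hc0 h3
          · exact ⟨s₁, hs₁, h1⟩
      refine ⟨Function.update u ⟨t, htn⟩ s, fun i => ?_, fun x hx => ?_⟩
      · rcases eq_or_ne i ⟨t, htn⟩ with rfl | hne'
        · simpa using hsS
        · rw [Function.update_of_ne hne']; exact hu i
      · set cx : F := ∑ j', b ⟨t, htn⟩ j' * x j' with hcx
        have hsplit : ∀ j, Tmap a b u t x j + s * cx * a ⟨t, htn⟩ j = 0 := by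
          intro j
          have hxj := hx j
          rw [Tmap_apply, filter_lt_succ htn, Finset.sum_insert (by simp)] at hxj
          rw [Function.update_self] at hxj
          have hrest : ∑ i ∈ Finset.univ.filter (fun i : Fin n => (i : ℕ) < t),
              Function.update u ⟨t, htn⟩ s i * (∑ j', b i j' * x j') * a i j
              = Tmap a b u t x j := by
            rw [Tmap_apply]
            refine Finset.sum_congr rfl fun i hi => ?_
            have hine : i ≠ ⟨t, htn⟩ := by
              have h5 := (Finset.mem_filter.mp hi).2
              intro h6; rw [h6] at h5; simp at h5
            rw [Function.update_of_ne hine]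
          rw [hrest] at hxj
          linear_combination hxj
        have hXY : Tmap a b u t x = Tmap a b u t ((-(s * cx)) • y) := by
          rw [LinearMap.map_smul, hy]
          funext j
          have h7 := hsplit j
          simp only [Pi.smul_apply, smul_eq_mul]
          linear_combination h7
        have hx_eq : x = (-(s * cx)) • y := hinj hXY
        have h1 : cx = -(s * cx) * c := by
          have hterm : ∀ j' : Fin K, b ⟨t, htn⟩ j' * x j'
              = -(s * cx) * (b ⟨t, htn⟩ j' * y j') := by
            intro j'
            rw [hx_eq]
            simp only [Pi.smul_apply, smul_eq_mul]
            ring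
          calc cx = ∑ j', b ⟨t, htn⟩ j' * x j' := hcx
            _ = ∑ j', -(s * cx) * (b ⟨t, htn⟩ j' * y j') :=
                Finset.sum_congr rfl fun j' _ => hterm j'
            _ = -(s * cx) * ∑ j', b ⟨t, htn⟩ j' * y j' := by rw [← Finset.mul_sum]
            _ = -(s * cx) * c := by rw [← hc]
        have h2 : cx * (1 + s * c) = 0 := by linear_combination h1
        have hcx0 : cx = 0 := by
          rcases mul_eq_zero.mp h2 with h3 | h3
          · exact h3
          · exact absurd h3 hsc
        rw [hcx0] at hx_eq
        simpa using hx_eq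
  obtain ⟨u, hu, hker⟩ := H n hKn le_rfl
  refine ⟨u, hu, fun x hx => hker x fun j => ?_⟩
  rw [Tmap_apply,
    show (Finset.univ.filter fun i : Fin n => (i : ℕ) < n) = Finset.univ from by
      ext i; simp [i.isLt]]
  exact hx j

end GaloisAux

/-- Under the hypotheses of Statement 11, for all
`1 ≤ k ≤ ⌊(p^s+n)/(p^s+1)⌋` and `0 ≤ h ≤ k-1` there exists an `s`-Galois LCD code of
length `n`, dimension `k - h` and minimum Hamming weight at least `n - k + 1`. -/
theorem exists_galois_lcd_code
    {p m s r n : ℕ} [Fact p.Prime] (hodd : Odd p)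
    {F : Type*} [Field F] [Fintype F] [CharP F p] (hcard : Fintype.card F = p ^ m)
    (hs : 0 < s) (hsm : 2 * s ∣ m)
    (hr1 : 1 ≤ r) (hr2 : r ≤ p ^ s - 1)
    (hn : n = r * (p ^ m - 1) / (p ^ s - 1)) :
    ∀ k, 1 ≤ k → k ≤ (p ^ s + n) / (p ^ s + 1) → ∀ h, h ≤ k - 1 →
      ∃ D : Submodule F (Fin n → F),
        Module.finrank F D = k - h ∧
        (∀ c ∈ D, c ≠ 0 → n - k + 1 ≤ hwt c) ∧
        D ⊓ sGaloisDual p s D = ⊥ := by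
  classical
  intro k hk1 hk2 h hh
  have hp : p.Prime := Fact.out
  have hp3 : 3 ≤ p := by
    have h2 := hp.two_le
    have : p ≠ 2 := by rintro rfl; exact (Nat.not_odd_iff_even.mpr even_two) hodd
    omega
  have hps3 : 3 ≤ p ^ s := le_trans hp3 (Nat.le_self_pow hs.ne' p)
  have hm0 : m ≠ 0 := by
    rintro rfl
    have h2 := Fintype.one_lt_card (α := F)
    rw [hcard] at h2; simp at h2
  have h2sm : 2 * s ≤ m := Nat.le_of_dvd (Nat.pos_of_ne_zero hm0) hsm
  obtain ⟨d, hd⟩ := hsm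
  have hdvd : p ^ s - 1 ∣ p ^ m - 1 := by
    have hpm : p ^ m = (p ^ s) ^ (2 * d) := by
      rw [← pow_mul, hd]; ring_nf
    rw [hpm]
    simpa using Nat.sub_dvd_pow_sub_pow (p ^ s) 1 (2 * d)
  have hexact : n * (p ^ s - 1) = r * (p ^ m - 1) := by
    rw [hn, Nat.div_mul_cancel (Dvd.dvd.mul_left hdvd r)]
  have hq2s : p ^ (2 * s) ≤ p ^ m := Nat.pow_le_pow_right (by omega) h2sm
  have hq2s' : (p ^ s + 1) * (p ^ s - 1) = p ^ (2 * s) - 1 := by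
    have h1 : p ^ (2 * s) = (p ^ s) ^ 2 := by rw [← pow_mul, mul_comm]
    rw [h1, Nat.sq_sub_sq (p ^ s) 1]
  have hq1 : 2 * (p ^ s + 1) ≤ p ^ m - 1 := by
    have h1 : (p ^ s + 1) * (p ^ s - 1) ≤ p ^ m - 1 := by rw [hq2s']; omega
    have h2 : (p ^ s + 1) * 2 ≤ (p ^ s + 1) * (p ^ s - 1) :=
      Nat.mul_le_mul_left _ (by omega)
    omega
  have hnq : n ≤ p ^ m - 1 := by
    have h1 : r * (p ^ m - 1) ≤ (p ^ m - 1) * (p ^ s - 1) := by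
      rw [mul_comm]
      exact Nat.mul_le_mul_left _ hr2
    have h2 : n * (p ^ s - 1) ≤ (p ^ m - 1) * (p ^ s - 1) := by rw [hexact]; exact h1
    exact Nat.le_of_mul_le_mul_right h2 (by omega)
  have hn1 : 1 ≤ n := by
    rcases Nat.eq_zero_or_pos n with h0 | h1
    · exfalso
      rw [h0, zero_mul] at hexact
      have h3 : 0 < r * (p ^ m - 1) := Nat.mul_pos (by omega) (by omega)
      omega
    · exact h1
  have hkmul : k * (p ^ s + 1) ≤ p ^ s + n := (Nat.le_div_iff_mul_le (by omega)).mp hk2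
  have hkn : k ≤ n := by
    have h1 : k * (p ^ s + 1) = k * p ^ s + k := by ring
    have h2 : 1 * p ^ s ≤ k * p ^ s := Nat.mul_le_mul_right _ hk1
    omega
  set K := k - h with hKdef
  have hK1 : 1 ≤ K := by omega
  have hKn : K ≤ n := by omega
  -- the evaluation points
  have hcardne : (Finset.univ.filter (fun x : F => x ≠ 0)).card = p ^ m - 1 := by
    have he : (Finset.univ.filter (fun x : F => x ≠ 0)) = Finset.univ.erase 0 := by
      ext x
      simp [Finset.mem_erase, and_comm]
    rw [he, Finset.card_erase_of_mem (Finset.mem_univ 0), Finset.card_univ, hcard]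
  obtain ⟨αe, hαe⟩ := Function.Embedding.exists_of_card_le_finset
      (α := Fin n) (s := Finset.univ.filter (fun x : F => x ≠ 0))
      (by rw [hcardne, Fintype.card_fin]; exact hnq)
  set α : Fin n → F := fun i => αe i with hα
  have hαinj : Function.Injective α := αe.injective
  have hα0 : ∀ i, α i ≠ 0 := fun i => by
    have hmem : α i ∈ Finset.univ.filter (fun x : F => x ≠ 0) := hαe ⟨i, rfl⟩
    exact (Finset.mem_filter.mp hmem).2
  -- the set of (p^s+1)-st powers
  set N : ℕ := p ^ s + 1 with hNdef
  set S : Set F := {x | ∃ w : F, w ≠ 0 ∧ w ^ N = x} with hSdef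
  have hS0 : (0 : F) ∉ S := by
    rintro ⟨w, hw, hw0⟩
    exact hw ((pow_eq_zero_iff (by omega)).mp hw0)
  obtain ⟨x₀, hx₀0, hx₀⟩ : ∃ x : F, x ≠ 0 ∧ x ^ N ≠ 1 := by
    by_contra hcon
    push_neg at hcon
    have hmonic := Polynomial.monic_X_pow_sub_C (1 : F) (n := N) (by omega)
    have hne := hmonic.ne_zero
    have hsub : (Finset.univ.filter (fun x : F => x ≠ 0))
        ⊆ (Polynomial.X ^ N - Polynomial.C 1 : Polynomial F).roots.toFinset := by
      intro x hx
      rw [Multiset.mem_toFinset, Polynomial.mem_roots hne]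
      have hxe := hcon x (Finset.mem_filter.mp hx).2
      simp [Polynomial.IsRoot, hxe]
    have hle := Finset.card_le_card hsub
    have hle2 : ((Polynomial.X ^ N - Polynomial.C 1 : Polynomial F).roots.toFinset).card ≤ N := by
      refine le_trans (Multiset.toFinset_card_le _) ?_
      have hcr := Polynomial.card_roots' (Polynomial.X ^ N - Polynomial.C (1 : F))
      rwa [Polynomial.natDegree_X_pow_sub_C] at hcr
    rw [hcardne] at hle
    omega
  have hs₁ : (1 : F) ∈ S := ⟨1, one_ne_zero, one_pow N⟩
  have hs₂ : x₀ ^ N ∈ S := ⟨x₀, hx₀0, rfl⟩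
  have hne12 : (1 : F) ≠ x₀ ^ N := fun hh' => hx₀ hh'.symm
  -- Frobenius injectivity
  have hfrobinj : ∀ x y : F, x ^ p ^ s = y ^ p ^ s → x = y := by
    intro x y hxy
    have h0 : (x - y) ^ p ^ s = 0 := by rw [sub_pow_char_pow, hxy, sub_self]
    have h1 : x - y = 0 := (pow_eq_zero_iff (a := x - y) (pow_ne_zero s hp.ne_zero)).mp h0
    exact sub_eq_zero.mp h1
  set δ : Fin n → F := fun i => α i ^ p ^ s with hδ
  have hδinj : Function.Injective δ := fun i j hij => hαinj (hfrobinj _ _ hij)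
  -- apply the core lemma
  obtain ⟨u, huS, hker⟩ := core hKn (fun i j => α i ^ (j : ℕ)) (fun i j => δ i ^ (j : ℕ))
      S hS0 hs₁ hs₂ hne12
      (fun w hw => helperB (β := fun i => α (Fin.castLE hKn i))
        (hαinj.comp (Fin.castLE_injective hKn)) (fun j => by exact hw j))
      (fun x hx => helperA (β := fun i => δ (Fin.castLE hKn i))
        (hδinj.comp (Fin.castLE_injective hKn)) (fun i => by exact hx i))
  have hu' : ∀ i, ∃ w : F, w ≠ 0 ∧ w ^ N = u i := huS
  choose v hv0 hvN using hu'
  set R : Fin K → Fin n → F := fun j i => v i * α i ^ (j : ℕ) with hR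
  have hcw : ∀ (g : Fin K → F) (i : Fin n),
      (∑ j, g j • R j) i = v i * ∑ j, g j * α i ^ (j : ℕ) := by
    intro g i
    rw [Finset.sum_apply, Finset.mul_sum]
    refine Finset.sum_congr rfl fun j _ => ?_
    simp only [Pi.smul_apply, smul_eq_mul, hR]
    ring
  have hRli : LinearIndependent F R := by
    rw [Fintype.linearIndependent_iff]
    intro g hg j
    have hz : ∀ i' : Fin K, ∑ j, g j * α (Fin.castLE hKn i') ^ (j : ℕ) = 0 := by
      intro i'
      have h0 := congrFun hg (Fin.castLE hKn i')
      rw [hcw g (Fin.castLE hKn i')] at h0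
      rcases mul_eq_zero.mp h0 with h1 | h1
      · exact absurd h1 (hv0 _)
      · exact h1
    have hgz := helperA (β := fun i' => α (Fin.castLE hKn i'))
      (hαinj.comp (Fin.castLE_injective hKn)) hz
    exact congrFun hgz j
  refine ⟨Submodule.span F (Set.range R), ?_, ?_, ?_⟩
  · rw [finrank_span_eq_card hRli, Fintype.card_fin]
  · -- minimum weight
    intro c hc hc0
    obtain ⟨g, hg⟩ := (Submodule.mem_span_range_iff_exists_fun F).mp hc
    have hg0 : g ≠ 0 := by
      rintro rfl
      apply hc0
      rw [← hg]
      simp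
    have hZcard : (Finset.univ.filter
        (fun i : Fin n => ∑ j, g j * α i ^ (j : ℕ) = 0)).card ≤ K - 1 := by
      by_contra hcon
      push_neg at hcon
      obtain ⟨ψ, hψ⟩ := Function.Embedding.exists_of_card_le_finset (α := Fin K)
        (s := Finset.univ.filter (fun i : Fin n => ∑ j, g j * α i ^ (j : ℕ) = 0))
        (by rw [Fintype.card_fin]; omega)
      have hz : ∀ i' : Fin K, ∑ j, g j * α (ψ i') ^ (j : ℕ) = 0 := by
        intro i'
        have hmem := hψ ⟨i', rfl⟩
        exact (Finset.mem_filter.mp hmem).2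
      exact hg0 (helperA (β := fun i' => α (ψ i')) (hαinj.comp ψ.injective) hz)
    have hset : {i | c i ≠ 0} = ↑(Finset.univ.filter
        (fun i : Fin n => ¬ (∑ j, g j * α i ^ (j : ℕ) = 0))) := by
      ext i
      simp only [Set.mem_setOf_eq, Finset.coe_filter, Finset.mem_univ, true_and]
      rw [← hg, hcw]
      constructor
      · intro h1 h2
        exact h1 (by rw [h2, mul_zero])
      · intro h1
        exact mul_ne_zero (hv0 i) h1
    have hwtc : hwt c = (Finset.univ.filter
        (fun i : Fin n => ¬ (∑ j, g j * α i ^ (j : ℕ) = 0))).card := by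
      unfold hwt
      rw [hset]
      exact Set.ncard_coe_finset _
    have hcardsum := Finset.card_filter_add_card_filter_not
      (s := (Finset.univ : Finset (Fin n)))
      (p := fun i : Fin n => ∑ j, g j * α i ^ (j : ℕ) = 0)
    rw [Finset.card_univ, Fintype.card_fin] at hcardsum
    omega
  · -- trivial Galois hull
    apply (Submodule.eq_bot_iff _).mpr
    intro x hx
    obtain ⟨hxD, hxdual⟩ := Submodule.mem_inf.mp hx
    have hxdual' : ∀ cc ∈ Submodule.span F (Set.range R),
        ∑ i, cc i * x i ^ p ^ s = 0 := hxdual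
    obtain ⟨g, hg⟩ := (Submodule.mem_span_range_iff_exists_fun F).mp hxD
    have hxpow : ∀ i, x i ^ p ^ s
        = v i ^ p ^ s * ∑ j' : Fin K, (g j' ^ p ^ s) * δ i ^ (j' : ℕ) := by
      intro i
      rw [← hg, hcw, mul_pow]
      congr 1
      rw [sum_pow_char_pow]
      refine Finset.sum_congr rfl fun j' _ => ?_
      rw [mul_pow]
      congr 1
      simp only [hδ]
      rw [← pow_mul, ← pow_mul, mul_comm]
    have hgpow : (fun j' : Fin K => g j' ^ p ^ s) = 0 := by
      apply hker
      intro j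
      have hdj := hxdual' (R j) (Submodule.subset_span ⟨j, rfl⟩)
      calc ∑ i, u i * (∑ j' : Fin K, δ i ^ (j' : ℕ) * (g j' ^ p ^ s)) * α i ^ (j : ℕ)
          = ∑ i, R j i * x i ^ p ^ s := by
            refine Finset.sum_congr rfl fun i _ => ?_
            rw [hxpow i]
            simp only [hR]
            rw [← hvN i, hNdef, pow_add, pow_one]
            have hswap : (∑ j' : Fin K, δ i ^ (j' : ℕ) * (g j' ^ p ^ s))
                = ∑ j' : Fin K, (g j' ^ p ^ s) * δ i ^ (j' : ℕ) :=
              Finset.sum_congr rfl fun _ _ => mul_comm _ _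
            rw [hswap]
            ring
        _ = 0 := hdj
    have hgz : g = 0 := by
      funext j
      have h1 := congrFun hgpow j
      exact (pow_eq_zero_iff (a := g j) (pow_ne_zero s hp.ne_zero)).mp h1
    rw [← hg, hgz]
    simp


end
end

section
/- Let q = p^m with p an odd prime, fix an integer 0 ≤ s < m, and let C_1 and C_2 be linear codes over F_q of length n with parameters [n,k_1,d_1]_q and [n,k_2,d_2]_q respectively (both nonzero). Let A be the 2×2 matrix with rows (1,1) and (1,−1), and let C = [C_1,C_2]A be the matrix-product code. Then C is a linear code over F_q of length 2n and dimension k_1+k_2, its minimum Hamming weight satisfies d(C) ≥ min{2d_1, d_2}, and dim_{F_q} Hull_s(C) = dim_{F_q} Hull_s(C_1) + dim_{F_q} Hull_s(C_2). -/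
open Finset Matrix

noncomputable section

section Aux

variable {n : ℕ} {F : Type*} [Field F]

/-- The map `(c₁, c₂) ↦ (c₁ + c₂, c₁ - c₂)` into two blocks. -/
def phiL (n : ℕ) (F : Type*) [Field F] :
    ((Fin n → F) × (Fin n → F)) →ₗ[F] (Fin 2 × Fin n → F) where
  toFun c := fun x => if x.1 = 0 then c.1 x.2 + c.2 x.2 else c.1 x.2 - c.2 x.2
  map_add' a b := by funext x; by_cases h : x.1 = 0 <;> simp [h] <;> ring
  map_smul' r a := by funext x; by_cases h : x.1 = 0 <;> simp [h] <;> ring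

lemma phiL_apply₀ (c : (Fin n → F) × (Fin n → F)) (i : Fin n) :
    phiL n F c ((0 : Fin 2), i) = c.1 i + c.2 i := by simp [phiL]

lemma phiL_apply₁ (c : (Fin n → F) × (Fin n → F)) (i : Fin n) :
    phiL n F c ((1 : Fin 2), i) = c.1 i - c.2 i := by simp [phiL]

lemma phiL_inj (h2 : (2 : F) ≠ 0) : Function.Injective (phiL n F) := by
  intro a b hab
  have h0 : ∀ i, a.1 i + a.2 i = b.1 i + b.2 i := fun i => by
    have := congrFun hab ((0 : Fin 2), i); rwa [phiL_apply₀, phiL_apply₀] at this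
  have h1 : ∀ i, a.1 i - a.2 i = b.1 i - b.2 i := fun i => by
    have := congrFun hab ((1 : Fin 2), i); rwa [phiL_apply₁, phiL_apply₁] at this
  have ha1 : a.1 = b.1 := funext fun i =>
    mul_left_cancel₀ h2 (by linear_combination h0 i + h1 i)
  have ha2 : a.2 = b.2 := funext fun i =>
    mul_left_cancel₀ h2 (by linear_combination h0 i - h1 i)
  exact Prod.ext ha1 ha2

lemma mem_mpc {C₁ C₂ : Submodule F (Fin n → F)} {x : Fin 2 × Fin n → F} :
    x ∈ matrixProductCode ![C₁, C₂] !![(1 : F), 1; 1, -1] ↔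
      ∃ c₁ ∈ C₁, ∃ c₂ ∈ C₂, x = phiL n F (c₁, c₂) := by
  constructor
  · rintro ⟨c, hc, hx⟩
    refine ⟨c 0, by simpa using hc 0, c 1, by simpa using hc 1, ?_⟩
    funext y
    obtain ⟨j, i⟩ := y
    rw [hx j i, Fin.sum_univ_two]
    fin_cases j <;> simp [phiL] <;> ring
  · rintro ⟨c₁, h₁, c₂, h₂, rfl⟩
    refine ⟨![c₁, c₂], fun u => by fin_cases u <;> simpa, fun j i => ?_⟩
    rw [Fin.sum_univ_two]
    fin_cases j <;> simp [phiL] <;> ring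

lemma mpc_eq_map (C₁ C₂ : Submodule F (Fin n → F)) :
    matrixProductCode ![C₁, C₂] !![(1 : F), 1; 1, -1] =
      Submodule.map (phiL n F) (C₁.prod C₂) := by
  ext x
  rw [mem_mpc]
  simp only [Submodule.mem_map, Submodule.mem_prod]
  constructor
  · rintro ⟨c₁, h₁, c₂, h₂, rfl⟩; exact ⟨(c₁, c₂), ⟨h₁, h₂⟩, rfl⟩
  · rintro ⟨⟨c₁, c₂⟩, ⟨h₁, h₂⟩, rfl⟩; exact ⟨c₁, h₁, c₂, h₂, rfl⟩

lemma finrank_map_prod (h2 : (2 : F) ≠ 0) (W₁ W₂ : Submodule F (Fin n → F)) :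
    Module.finrank F (Submodule.map (phiL n F) (W₁.prod W₂)) =
      Module.finrank F W₁ + Module.finrank F W₂ := by
  set θ : (W₁ × W₂) →ₗ[F] (Fin n → F) × (Fin n → F) :=
    (W₁.subtype).prodMap (W₂.subtype) with hθ
  have hrθ : LinearMap.range θ = W₁.prod W₂ := by
    ext y
    simp only [LinearMap.mem_range, Submodule.mem_prod]
    constructor
    · rintro ⟨⟨a, b⟩, rfl⟩; exact ⟨a.2, b.2⟩
    · rintro ⟨hy1, hy2⟩; exact ⟨(⟨y.1, hy1⟩, ⟨y.2, hy2⟩), rfl⟩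
  have hmap : Submodule.map (phiL n F) (W₁.prod W₂) =
      LinearMap.range ((phiL n F) ∘ₗ θ) := by
    rw [LinearMap.range_comp, hrθ]
  have hθinj : Function.Injective θ := by
    intro a b h
    rw [hθ] at h
    simp only [LinearMap.prodMap_apply, Submodule.coe_subtype, Prod.mk.injEq] at h
    exact Prod.ext (Subtype.ext h.1) (Subtype.ext h.2)
  have hinj : Function.Injective ((phiL n F) ∘ₗ θ) := (phiL_inj h2).comp hθinj
  rw [hmap, ← (LinearEquiv.ofInjective _ hinj).finrank_eq]
  exact Module.finrank_prod

lemma mem_sGaloisDual' {p s : ℕ} [Fact p.Prime] [CharP F p] {ι : Type*} [Fintype ι]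
    {C : Submodule F (ι → F)} {x : ι → F} :
    x ∈ sGaloisDual p s C ↔ ∀ c ∈ C, ∑ i, c i * x i ^ p ^ s = 0 := Iff.rfl

lemma key_sum {p s : ℕ} [Fact p.Prime] [CharP F p] (a₁ a₂ c₁ c₂ : Fin n → F) :
    ∑ x : Fin 2 × Fin n, phiL n F (a₁, a₂) x * (phiL n F (c₁, c₂) x) ^ p ^ s =
      2 * ((∑ i, a₁ i * c₁ i ^ p ^ s) + ∑ i, a₂ i * c₂ i ^ p ^ s) := by
  rw [Fintype.sum_prod_type, Fin.sum_univ_two]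
  calc (∑ i, phiL n F (a₁, a₂) (0, i) * (phiL n F (c₁, c₂) (0, i)) ^ p ^ s)
        + ∑ i, phiL n F (a₁, a₂) (1, i) * (phiL n F (c₁, c₂) (1, i)) ^ p ^ s
      = ∑ i, ((a₁ i + a₂ i) * (c₁ i ^ p ^ s + c₂ i ^ p ^ s)
          + (a₁ i - a₂ i) * (c₁ i ^ p ^ s - c₂ i ^ p ^ s)) := by
        rw [← Finset.sum_add_distrib]
        refine Finset.sum_congr rfl fun i _ => ?_
        rw [phiL_apply₀, phiL_apply₀, phiL_apply₁, phiL_apply₁,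
          add_pow_char_pow, sub_pow_char_pow]
    _ = ∑ i, (2 * (a₁ i * c₁ i ^ p ^ s) + 2 * (a₂ i * c₂ i ^ p ^ s)) :=
        Finset.sum_congr rfl fun i _ => by ring
    _ = 2 * ((∑ i, a₁ i * c₁ i ^ p ^ s) + ∑ i, a₂ i * c₂ i ^ p ^ s) := by
        rw [Finset.sum_add_distrib, ← Finset.mul_sum, ← Finset.mul_sum, mul_add]

lemma hull_eq {p s : ℕ} [Fact p.Prime] [CharP F p] (h2 : (2 : F) ≠ 0)
    (C₁ C₂ : Submodule F (Fin n → F)) :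
    sGaloisHull p s (matrixProductCode ![C₁, C₂] !![(1 : F), 1; 1, -1]) =
      Submodule.map (phiL n F) ((sGaloisHull p s C₁).prod (sGaloisHull p s C₂)) := by
  ext x
  simp only [sGaloisHull, Submodule.mem_inf, Submodule.mem_map, Submodule.mem_prod]
  constructor
  · rintro ⟨hxC, hxD⟩
    rw [mem_mpc] at hxC
    obtain ⟨c₁, h₁, c₂, h₂, rfl⟩ := hxC
    rw [mem_sGaloisDual'] at hxD
    refine ⟨(c₁, c₂), ⟨⟨h₁, ?_⟩, h₂, ?_⟩, rfl⟩
    · intro a ha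
      have := hxD (phiL n F (a, 0)) (mem_mpc.mpr ⟨a, ha, 0, (C₂).zero_mem, rfl⟩)
      rw [key_sum] at this
      simpa [h2] using this
    · intro a ha
      have := hxD (phiL n F (0, a)) (mem_mpc.mpr ⟨0, (C₁).zero_mem, a, ha, rfl⟩)
      rw [key_sum] at this
      simpa [h2] using this
  · rintro ⟨⟨c₁, c₂⟩, ⟨⟨h₁C, h₁D⟩, h₂C, h₂D⟩, rfl⟩
    refine ⟨mem_mpc.mpr ⟨c₁, h₁C, c₂, h₂C, rfl⟩, ?_⟩
    rw [mem_sGaloisDual']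
    intro y hy
    rw [mem_mpc] at hy
    obtain ⟨a₁, ha₁, a₂, ha₂, rfl⟩ := hy
    rw [key_sum, h₁D a₁ ha₁, h₂D a₂ ha₂]
    ring

lemma hwt_two_blocks {G : Type*} [Zero G] (c : Fin 2 × Fin n → G) :
    hwt c = hwt (fun i => c (0, i)) + hwt (fun i => c (1, i)) := by
  have himg : {x : Fin 2 × Fin n | c x ≠ 0} =
      (Prod.mk 0 '' {i | c (0, i) ≠ 0}) ∪ (Prod.mk 1 '' {i | c (1, i) ≠ 0}) := by
    ext ⟨j, i⟩
    fin_cases j <;> simp [Prod.ext_iff]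
  have hinj : ∀ j : Fin 2, Function.Injective (Prod.mk j : Fin n → Fin 2 × Fin n) :=
    fun j a b h => congrArg Prod.snd h
  have hdisj : Disjoint (Prod.mk (0 : Fin 2) '' {i | c (0, i) ≠ 0})
      (Prod.mk 1 '' {i | c (1, i) ≠ 0}) := by
    rw [Set.disjoint_left]
    rintro _ ⟨i, _, rfl⟩ ⟨i', _, h⟩
    exact absurd (congrArg Prod.fst h) (by simp)
  unfold hwt
  rw [himg, Set.ncard_union_eq hdisj (Set.toFinite _) (Set.toFinite _),
    Set.ncard_image_of_injective _ (hinj 0), Set.ncard_image_of_injective _ (hinj 1)]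

lemma hwt_sub_le (u v : Fin n → F) :
    hwt (fun i => u i - v i) ≤ hwt u + hwt v := by
  unfold hwt
  refine le_trans (Set.ncard_le_ncard ?_ (Set.toFinite _)) (Set.ncard_union_le _ _)
  intro i hi
  by_contra h
  simp only [Set.mem_union, Set.mem_setOf_eq, not_or, not_not] at h
  exact hi (by simp [Set.mem_setOf_eq, h.1, h.2])

lemma hwt_two_smul (h2 : (2 : F) ≠ 0) (v : Fin n → F) :
    hwt (fun i => 2 * v i) = hwt v := by
  unfold hwt
  congr 1
  ext i
  simp [mul_eq_zero, h2]

end Aux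

/-- For `p` an odd prime and `A = [[1,1],[1,-1]]`, the matrix-product code
`C = [C₁,C₂]A` has length `2n`, dimension `k₁+k₂`, `d(C) ≥ min{2d₁, d₂}`, and
`dim Hull_s(C) = dim Hull_s(C₁) + dim Hull_s(C₂)`. -/
theorem two_block_matrixProduct
    {p m s : ℕ} [Fact p.Prime] (hodd : Odd p) (hs : s < m)
    {F : Type*} [Field F] [Fintype F] [CharP F p] (hcard : Fintype.card F = p ^ m)
    {n k₁ k₂ d₁ d₂ : ℕ} (C₁ C₂ : Submodule F (Fin n → F))
    (hk₁ : Module.finrank F C₁ = k₁) (hd₁ : minHWt C₁ d₁)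
    (hk₂ : Module.finrank F C₂ = k₂) (hd₂ : minHWt C₂ d₂) :
    Module.finrank F (matrixProductCode ![C₁, C₂] !![(1 : F), 1; 1, -1]) = k₁ + k₂ ∧
    (∀ c ∈ matrixProductCode ![C₁, C₂] !![(1 : F), 1; 1, -1], c ≠ 0 →
      min (2 * d₁) d₂ ≤ hwt c) ∧
    Module.finrank F (sGaloisHull p s (matrixProductCode ![C₁, C₂] !![(1 : F), 1; 1, -1])) =
      Module.finrank F (sGaloisHull p s C₁) + Module.finrank F (sGaloisHull p s C₂) := by
  have hp : p.Prime := Fact.out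
  have hp2 : p ≠ 2 := by
    rintro rfl
    exact (by decide : ¬ Odd 2) hodd
  have h2 : (2 : F) ≠ 0 := by
    intro h
    have h' : ((2 : ℕ) : F) = 0 := by exact_mod_cast h
    have hdvd : p ∣ 2 := (CharP.cast_eq_zero_iff F p 2).mp h'
    exact hp2 ((Nat.prime_dvd_prime_iff_eq hp Nat.prime_two).mp hdvd)
  refine ⟨?_, ?_, ?_⟩
  · rw [mpc_eq_map, finrank_map_prod h2, hk₁, hk₂]
  · intro c hc hc0
    rw [mem_mpc] at hc
    obtain ⟨c₁, h₁, c₂, h₂, rfl⟩ := hc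
    rw [hwt_two_blocks]
    have e0 : (fun i => phiL n F (c₁, c₂) (0, i)) = fun i => c₁ i + c₂ i :=
      funext fun i => phiL_apply₀ _ i
    have e1 : (fun i => phiL n F (c₁, c₂) (1, i)) = fun i => c₁ i - c₂ i :=
      funext fun i => phiL_apply₁ _ i
    rw [e0, e1]
    by_cases hc₂ : c₂ = 0
    · subst hc₂
      have hc₁ : c₁ ≠ 0 := by
        rintro rfl
        exact hc0 ((phiL n F).map_zero)
      have hle : d₁ ≤ hwt c₁ := hd₁.2 c₁ h₁ hc₁
      have : (fun i => c₁ i + (0 : Fin n → F) i) = c₁ := by funext i; simp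
      rw [this]
      have : (fun i => c₁ i - (0 : Fin n → F) i) = c₁ := by funext i; simp
      rw [this]
      calc min (2 * d₁) d₂ ≤ 2 * d₁ := min_le_left _ _
        _ ≤ hwt c₁ + hwt c₁ := by omega
    · have hle : d₂ ≤ hwt c₂ := hd₂.2 c₂ h₂ hc₂
      have key : hwt c₂ ≤ hwt (fun i => c₁ i + c₂ i) + hwt (fun i => c₁ i - c₂ i) := by
        have := hwt_sub_le (fun i => c₁ i + c₂ i) (fun i => c₁ i - c₂ i)
        have e : (fun i => (fun i => c₁ i + c₂ i) i - (fun i => c₁ i - c₂ i) i) =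
            fun i => 2 * c₂ i := by funext i; ring
        rw [e, hwt_two_smul h2] at this
        exact this
      calc min (2 * d₁) d₂ ≤ d₂ := min_le_right _ _
        _ ≤ hwt c₂ := hle
        _ ≤ _ := key
  · rw [hull_eq h2, finrank_map_prod h2]

end
end

section
/- Let q be a prime power, m ≥ 1, and let g = (g_1,…,g_m) be a basis of F_{q^m} over F_q. For 1 ≤ k ≤ m, the Gabidulin code G_k(g) ⊆ F_{q^m}^m, defined as the F_{q^m}-row span of the k×m matrix whose (i,j) entry is g_j^{q^{i-1}} (1 ≤ i ≤ k, 1 ≤ j ≤ m), is an MDS code with parameters [m, k, m−k+1] over F_{q^m}; that is, it has F_{q^m}-dimension k and minimum Hamming weight m−k+1. -/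
open Finset Matrix

noncomputable section

section
open Polynomial
variable {Fq K : Type*} [Field Fq] [Fintype Fq] [Field K] [Fintype K] [Algebra Fq K]

lemma gab_add_pow (x y : K) (n : ℕ) :
    (x + y) ^ (Fintype.card Fq) ^ n = x ^ (Fintype.card Fq) ^ n + y ^ (Fintype.card Fq) ^ n := by
  obtain ⟨p, hc⟩ := CharP.exists Fq
  haveI : CharP Fq p := hc
  obtain ⟨e, hp, hcard⟩ := FiniteField.card Fq p
  haveI : CharP K p := charP_of_injective_algebraMap (algebraMap Fq K).injective p
  haveI : Fact p.Prime := ⟨hp⟩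
  rw [hcard, ← pow_mul]; exact add_pow_char_pow ..

lemma gab_smul_pow (c : Fq) (x : K) (n : ℕ) :
    (c • x) ^ (Fintype.card Fq) ^ n = c • (x ^ (Fintype.card Fq) ^ n) := by
  have key : (algebraMap Fq K c) ^ (Fintype.card Fq) ^ n = algebraMap Fq K c := by
    induction n with
    | zero => simp
    | succ n ih =>
      rw [pow_succ, pow_mul, ih, ← map_pow, FiniteField.pow_card]
  rw [Algebra.smul_def, Algebra.smul_def, mul_pow, key]

/-- the kernel of the linearized polynomial as an `Fq`-submodule of `K` -/
def gabKer {k : ℕ} (a : Fin k → K) : Submodule Fq K where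
  carrier := {x | ∑ i, a i * x ^ (Fintype.card Fq) ^ (i : ℕ) = 0}
  add_mem' := by
    intro x y hx hy
    simp only [Set.mem_setOf_eq] at *
    calc ∑ i, a i * (x + y) ^ (Fintype.card Fq) ^ (i : ℕ)
        = ∑ i, (a i * x ^ (Fintype.card Fq) ^ (i : ℕ)
            + a i * y ^ (Fintype.card Fq) ^ (i : ℕ)) := by
          refine Finset.sum_congr rfl fun i _ => ?_
          rw [gab_add_pow, mul_add]
      _ = 0 := by rw [Finset.sum_add_distrib, hx, hy, add_zero]
  zero_mem' := by
    have : ∀ i : ℕ, (Fintype.card Fq) ^ i ≠ 0 :=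
      fun i => pow_ne_zero _ Fintype.card_ne_zero
    simp [Set.mem_setOf_eq, zero_pow (this _)]
  smul_mem' := by
    intro c x hx
    simp only [Set.mem_setOf_eq] at *
    calc ∑ i, a i * (c • x) ^ (Fintype.card Fq) ^ (i : ℕ)
        = c • ∑ i, a i * x ^ (Fintype.card Fq) ^ (i : ℕ) := by
          rw [Finset.smul_sum]
          refine Finset.sum_congr rfl fun i _ => ?_
          rw [gab_smul_pow, mul_smul_comm]
      _ = 0 := by rw [hx, smul_zero]

lemma gabKer_finrank_le {k : ℕ} (a : Fin k → K) (ha : a ≠ 0) (hk : 1 ≤ k) :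
    Module.finrank Fq (gabKer (Fq := Fq) a) ≤ k - 1 := by
  classical
  set q := Fintype.card Fq with hqdef
  have hq : 1 < q := Fintype.one_lt_card
  set P : K[X] := ∑ i : Fin k, C (a i) * X ^ (q ^ (i : ℕ)) with hP
  obtain ⟨i0, hi0⟩ : ∃ i, a i ≠ 0 := by
    by_contra h
    push_neg at h
    exact ha (funext h)
  have hcoeff : P.coeff (q ^ (i0 : ℕ)) = a i0 := by
    rw [hP, finset_sum_coeff]
    rw [Finset.sum_eq_single i0]
    · simp [coeff_C_mul_X_pow]
    · intro i _ hne
      rw [coeff_C_mul_X_pow]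
      have : q ^ (i0 : ℕ) ≠ q ^ (i : ℕ) := by
        intro h
        exact hne (Fin.ext (Nat.pow_right_injective hq (h.symm)))
      simp [this]
    · intro h; exact absurd (Finset.mem_univ i0) h
  have hPne : P ≠ 0 := fun h => hi0 (by rw [← hcoeff, h, coeff_zero])
  have hdeg : P.natDegree ≤ q ^ (k - 1) := by
    refine (natDegree_sum_le _ _).trans ?_
    rw [Finset.fold_max_le]
    refine ⟨Nat.zero_le _, fun i _ => ?_⟩
    refine (natDegree_C_mul_X_pow_le _ _).trans ?_
    exact Nat.pow_le_pow_right (lt_trans zero_lt_one hq) (by omega)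
  -- every element of gabKer is a root of P
  have hroot : ∀ x : K, x ∈ gabKer (Fq := Fq) a → P.eval x = 0 := by
    intro x hx
    rw [hP, eval_finset_sum]
    simpa [eval_C, eval_X, eval_pow, eval_mul] using (show ∑ i, a i * x ^ q ^ (i : ℕ) = 0 from hx)
  -- card bound
  have hcard : Fintype.card (gabKer (Fq := Fq) a) ≤ q ^ (k - 1) := by
    have hinj : Function.Injective
        (fun x : gabKer (Fq := Fq) a => (⟨x.1, by
          rw [Multiset.mem_toFinset, mem_roots hPne]
          exact hroot x.1 x.2⟩ : {y // y ∈ P.roots.toFinset})) := by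
      intro x y hxy
      exact Subtype.ext (Subtype.mk_eq_mk.mp hxy)
    calc Fintype.card (gabKer (Fq := Fq) a)
        ≤ Fintype.card {y // y ∈ P.roots.toFinset} := Fintype.card_le_of_injective _ hinj
      _ = P.roots.toFinset.card := Fintype.card_coe _
      _ ≤ Multiset.card P.roots := Multiset.toFinset_card_le _
      _ ≤ P.natDegree := card_roots' P
      _ ≤ q ^ (k - 1) := hdeg
  have := Module.card_eq_pow_finrank (K := Fq) (V := gabKer (Fq := Fq) a)
  rw [this] at hcard
  exact (Nat.pow_le_pow_iff_right hq).mp hcard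

lemma gab_zero_count {m k : ℕ} (b : Module.Basis (Fin m) Fq K) (a : Fin k → K) (ha : a ≠ 0)
    (hk : 1 ≤ k) :
    {j : Fin m | ∑ i, a i * (b j) ^ (Fintype.card Fq) ^ (i : ℕ) = 0}.ncard ≤ k - 1 := by
  classical
  haveI : Module.Finite Fq K := Module.finite_iff_finite.mpr inferInstance
  set S := Finset.univ.filter fun j : Fin m =>
      ∑ i, a i * (b j) ^ (Fintype.card Fq) ^ (i : ℕ) = 0 with hS
  have hset : {j : Fin m | ∑ i, a i * (b j) ^ (Fintype.card Fq) ^ (i : ℕ) = 0} = ↑S := by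
    ext j; simp [hS]
  rw [hset, Set.ncard_coe_finset]
  have hmem : ∀ j ∈ S, b j ∈ gabKer (Fq := Fq) a := by
    intro j hj
    rw [hS, Finset.mem_filter] at hj
    exact hj.2
  have hli : LinearIndependent Fq (fun j : {j // j ∈ S} => b j.1) :=
    b.linearIndependent.comp Subtype.val Subtype.val_injective
  have hspan : Submodule.span Fq (Set.range fun j : {j // j ∈ S} => b j.1)
      ≤ gabKer (Fq := Fq) a := by
    rw [Submodule.span_le]
    rintro x ⟨j, rfl⟩
    exact hmem j.1 j.2
  calc S.card = Fintype.card {j // j ∈ S} := (Fintype.card_coe _).symm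
    _ = Module.finrank Fq (Submodule.span Fq (Set.range fun j : {j // j ∈ S} => b j.1)) :=
        (finrank_span_eq_card hli).symm
    _ ≤ Module.finrank Fq (gabKer (Fq := Fq) a) := Submodule.finrank_mono hspan
    _ ≤ k - 1 := gabKer_finrank_le a ha hk

end

section
variable {Fq K : Type*} [Field Fq] [Fintype Fq] [Field K] [Fintype K] [Algebra Fq K]

lemma gab_li {m k : ℕ} (b : Module.Basis (Fin m) Fq K) (hk1 : 1 ≤ k) (hk2 : k ≤ m) :
    LinearIndependent K (fun i : Fin k => fun j : Fin m =>
      (b j : K) ^ (Fintype.card Fq) ^ (i : ℕ)) := by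
  rw [Fintype.linearIndependent_iff]
  intro a hsum
  by_contra hne
  push_neg at hne
  obtain ⟨i0, hi0⟩ := hne
  have ha : a ≠ 0 := fun h => hi0 (by rw [h]; rfl)
  have hall : {j : Fin m | ∑ i, a i * (b j) ^ (Fintype.card Fq) ^ (i : ℕ) = 0} = Set.univ := by
    ext j
    simp only [Set.mem_setOf_eq, Set.mem_univ, iff_true]
    have := congrFun hsum j
    simpa [Finset.sum_apply, smul_eq_mul] using this
  have hle := gab_zero_count b a ha hk1
  rw [hall, Set.ncard_univ, Nat.card_eq_fintype_card, Fintype.card_fin] at hle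
  omega

theorem gabidulin_isMDS'
    {m : ℕ} (b : Module.Basis (Fin m) Fq K)
    {k : ℕ} (hk1 : 1 ≤ k) (hk2 : k ≤ m) :
    Module.finrank K (gabidulin (Fintype.card Fq) k (fun j => b j)) = k ∧
    minHWt (gabidulin (Fintype.card Fq) k (fun j => b j)) (m - k + 1) := by
  classical
  set q := Fintype.card Fq with hq
  set v : Fin k → (Fin m → K) := fun i => fun j => (b j : K) ^ q ^ (i : ℕ) with hv
  have hli : LinearIndependent K v := gab_li b hk1 hk2
  have hcode : gabidulin q k (fun j => b j) = Submodule.span K (Set.range v) := rfl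
  have hrankeq : Module.finrank K (gabidulin q k (fun j => b j)) = k := by
    rw [hcode, finrank_span_eq_card hli, Fintype.card_fin]
  refine ⟨hrankeq, ?_, ?_⟩
  · -- existence of a codeword of weight m - k + 1
    have hkm : k - 1 ≤ m := by omega
    set M : Matrix (Fin (k-1)) (Fin k) K :=
      fun r i => (b (Fin.castLE hkm r) : K) ^ q ^ (i : ℕ) with hM
    set ψ := M.mulVecLin with hψ
    have hker : LinearMap.ker ψ ≠ ⊥ := by
      intro hbot
      have h1 := LinearMap.finrank_range_add_finrank_ker ψ
      rw [hbot, finrank_bot, add_zero, Module.finrank_fin_fun] at h1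
      have h2 : Module.finrank K (LinearMap.range ψ) ≤ k - 1 := by
        have h3 := Submodule.finrank_le (LinearMap.range ψ)
        rwa [Module.finrank_fin_fun] at h3
      omega
    obtain ⟨a, haker, ha0⟩ := Submodule.exists_mem_ne_zero_of_ne_bot hker
    set c := ∑ i, a i • v i with hcdef
    have hcmem : c ∈ gabidulin q k (fun j => b j) := by
      rw [hcode]
      exact Submodule.sum_mem _ fun i _ =>
        Submodule.smul_mem _ _ (Submodule.subset_span ⟨i, rfl⟩)
    have hc0 : c ≠ 0 := by
      intro h
      exact ha0 (funext fun i => Fintype.linearIndependent_iff.mp hli a h i)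
    have hcj : ∀ j, c j = ∑ i, a i * (b j) ^ q ^ (i : ℕ) := fun j => by
      simp [hcdef, Finset.sum_apply, hv]
    have hzero_set : {j : Fin m | c j = 0}
        = {j : Fin m | ∑ i, a i * (b j) ^ q ^ (i : ℕ) = 0} := by
      ext j; simp [hcj j]
    have hupper : {j : Fin m | c j = 0}.ncard ≤ k - 1 := by
      rw [hzero_set]; exact gab_zero_count b a ha0 hk1
    have hlower : k - 1 ≤ {j : Fin m | c j = 0}.ncard := by
      have hzsub : Set.range (Fin.castLE hkm) ⊆ {j : Fin m | c j = 0} := by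
        rintro _ ⟨r, rfl⟩
        have hmv : M.mulVec a = 0 := haker
        have hr := congrFun hmv r
        simp only [Matrix.mulVec, dotProduct, Pi.zero_apply] at hr
        rw [Set.mem_setOf_eq, hcj]
        rw [← hr]
        exact Finset.sum_congr rfl fun i _ => (mul_comm _ _)
      calc k - 1 = Set.ncard (Set.range (Fin.castLE hkm)) := by
            rw [← Nat.card_coe_set_eq,
              Nat.card_range_of_injective (Fin.castLE_injective hkm),
              Nat.card_eq_fintype_card, Fintype.card_fin]
        _ ≤ {j : Fin m | c j = 0}.ncard := Set.ncard_le_ncard hzsub (Set.toFinite _)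
    have hcompl := Set.ncard_add_ncard_compl {j : Fin m | c j = 0} (Set.toFinite _)
    rw [Nat.card_eq_fintype_card, Fintype.card_fin] at hcompl
    have hcomplset : {j : Fin m | c j = 0}ᶜ = {j : Fin m | c j ≠ 0} := by
      ext j; simp
    refine ⟨c, hcmem, hc0, ?_⟩
    rw [hwt, ← hcomplset]  -- hwt c = ncard compl
    omega
  · -- lower bound
    intro c hc hc0
    rw [hcode, Submodule.mem_span_range_iff_exists_fun (R := K)] at hc
    obtain ⟨a, hac⟩ := hc
    have ha : a ≠ 0 := by
      rintro rfl
      apply hc0; rw [← hac]; simp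
    have hcj : ∀ j, c j = ∑ i, a i * (b j) ^ q ^ (i : ℕ) := fun j => by
      rw [← hac]; simp [Finset.sum_apply, hv]
    have hzero_set : {j : Fin m | c j = 0}
        = {j : Fin m | ∑ i, a i * (b j) ^ q ^ (i : ℕ) = 0} := by
      ext j; simp [hcj j]
    have hupper : {j : Fin m | c j = 0}.ncard ≤ k - 1 := by
      rw [hzero_set]; exact gab_zero_count b a ha hk1
    have hcompl := Set.ncard_add_ncard_compl {j : Fin m | c j = 0} (Set.toFinite _)
    rw [Nat.card_eq_fintype_card, Fintype.card_fin] at hcompl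
    have hcomplset : {j : Fin m | c j = 0}ᶜ = {j : Fin m | c j ≠ 0} := by
      ext j; simp
    rw [hwt, ← hcomplset]
    omega
end

/-- The Gabidulin code `G_k(g)` attached to a basis `g` of `F_{q^m}` over
`F_q` is an MDS code with parameters `[m, k, m-k+1]` over `F_{q^m}`. -/
theorem gabidulin_isMDS
    {Fq K : Type*} [Field Fq] [Fintype Fq] [Field K] [Fintype K] [Algebra Fq K]
    {m : ℕ} (hrank : Module.finrank Fq K = m) (b : Module.Basis (Fin m) Fq K)
    {k : ℕ} (hk1 : 1 ≤ k) (hk2 : k ≤ m) :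
    Module.finrank K (gabidulin (Fintype.card Fq) k (fun j => b j)) = k ∧
    minHWt (gabidulin (Fintype.card Fq) k (fun j => b j)) (m - k + 1) := by
  exact gabidulin_isMDS' b hk1 hk2

end
end
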